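/- arXiv:2003.05030 — 2 statements merged into one kernel-verified Lean document; each statement's English description precedes it below -/
import Mathlib

section
/- Let C > 0 and let W and W_n (n ∈ ℕ) be graphons with |W(u,v)| ≤ C and |W_n(u,v)| ≤ C for all u, v and all n. If ‖W_n − W‖_□ → 0 as n → ∞, then for every j ≥ 1, Λ_j(T_{W_n}) → Λ_j(T_W) and Λ_j(−T_{W_n}) → Λ_j(−T_W) as n → ∞. That is, for each fixed j, the j-th largest positive eigenvalue and the j-th smallest negative eigenvalue of the graphon operators converge (with the convention that missing eigenvalues are replaced by 0). -/
open MeasureTheory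
open scoped ENNReal

/-- The quadratic form `⟨T_W f, f⟩ = ∫∫ W(u,v) f(v) f(u) dv du` of the integral operator of `W`
on `L²([0,1])`. -/
noncomputable def quadForm (W : ℝ → ℝ → ℝ) (f : ℝ → ℝ) : ℝ :=
  ∫ u in Set.Icc (0 : ℝ) 1, (∫ v in Set.Icc (0 : ℝ) 1, W u v * f v) * f u

/-- The `j`-th Courant–Fischer value of the integral operator `T_W` on `L²([0,1])`:
`Λ_j(T_W) = sup` over `j`-dimensional subspaces `V` of `inf` over nonzero `f ∈ V` of the
Rayleigh quotient `⟨T_W f, f⟩ / ‖f‖²`. -/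
noncomputable def CF (W : ℝ → ℝ → ℝ) (j : ℕ) : ℝ :=
  ⨆ V : {V : Submodule ℝ (Lp ℝ 2 (volume.restrict (Set.Icc (0 : ℝ) 1))) //
      Module.finrank ℝ V = j},
    ⨅ f : {f : Lp ℝ 2 (volume.restrict (Set.Icc (0 : ℝ) 1)) // f ∈ V.1 ∧ f ≠ 0},
      quadForm W (f.1 : ℝ → ℝ) / ‖f.1‖ ^ 2

/-- The cut norm `‖U‖_□` of a kernel on `[0,1]²`: the supremum over measurable subsets `S, T` of
`[0,1]` of `|∫_S ∫_T U(u,v) du dv|`. -/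
noncomputable def cutNorm (U : ℝ → ℝ → ℝ) : ℝ :=
  ⨆ p : {p : Set ℝ × Set ℝ // MeasurableSet p.1 ∧ MeasurableSet p.2},
    |∫ u in p.1.1 ∩ Set.Icc (0 : ℝ) 1, ∫ v in p.1.2 ∩ Set.Icc (0 : ℝ) 1, U u v|

local notation "II" => Set.Icc (0 : ℝ) 1

lemma volI : volume (Set.Icc (0:ℝ) 1) = 1 := by rw [Real.volume_Icc]; norm_num

instance : IsProbabilityMeasure (volume.restrict (Set.Icc (0:ℝ) 1)) :=
  ⟨by rw [Measure.restrict_apply_univ, volI]⟩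

lemma finRestr (S : Set ℝ) (hS : S ⊆ II) : IsFiniteMeasure (volume.restrict S) :=
  ⟨by rw [Measure.restrict_apply_univ]
      exact lt_of_le_of_lt (measure_mono hS) (by rw [volI]; exact ENNReal.one_lt_top)⟩

lemma abs_integral_le (f : ℝ → ℝ) (μ : Measure ℝ) : |∫ x, f x ∂μ| ≤ ∫ x, |f x| ∂μ := by
  simpa using norm_integral_le_integral_norm (μ := μ) f

lemma abs_setIntegral_le {s : Set ℝ} (hs : MeasurableSet s) (hsub : s ⊆ II)
    {h : ℝ → ℝ} {D : ℝ} (hD : 0 ≤ D) (hb : ∀ x ∈ s, |h x| ≤ D) :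
    |∫ x in s, h x| ≤ D := by
  haveI : IsFiniteMeasure (volume.restrict s) := finRestr s hsub
  refine (abs_integral_le _ _).trans ?_
  have h2 : ∫ x in s, |h x| ≤ ∫ x in s, D := by
    refine integral_mono_of_nonneg (Filter.Eventually.of_forall fun x => abs_nonneg _)
      (integrable_const D) ?_
    filter_upwards [ae_restrict_mem hs] with x hx using hb x hx
  refine h2.trans ?_
  rw [setIntegral_const, smul_eq_mul]
  have hv : (volume s).toReal ≤ 1 := by
    have h1 : volume s ≤ 1 := by rw [← volI]; exact measure_mono hsub
    calc (volume s).toReal ≤ (1 : ℝ≥0∞).toReal := ENNReal.toReal_mono (by simp) h1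
      _ = 1 := by simp
  calc (volume s).toReal * D ≤ 1 * D := mul_le_mul_of_nonneg_right hv hD
    _ = D := one_mul D

lemma cut_le (U : ℝ → ℝ → ℝ) {D : ℝ} (hD : 0 ≤ D)
    (hUb : ∀ u ∈ II, ∀ v ∈ II, |U u v| ≤ D)
    {S T : Set ℝ} (hS : MeasurableSet S) (hT : MeasurableSet T) :
    |∫ u in S ∩ II, ∫ v in T ∩ II, U u v| ≤ cutNorm U := by
  have hbdd : BddAbove (Set.range fun p : {p : Set ℝ × Set ℝ //
      MeasurableSet p.1 ∧ MeasurableSet p.2} =>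
      |∫ u in p.1.1 ∩ II, ∫ v in p.1.2 ∩ II, U u v|) := by
    refine ⟨D, ?_⟩
    rintro x ⟨p, rfl⟩
    refine abs_setIntegral_le (p.2.1.inter measurableSet_Icc) Set.inter_subset_right hD ?_
    intro u hu
    exact abs_setIntegral_le (p.2.2.inter measurableSet_Icc) Set.inter_subset_right hD
      (fun v hv => hUb u hu.2 v hv.2)
  exact le_ciSup hbdd ⟨(S, T), hS, hT⟩

lemma cutNorm_nonneg (U : ℝ → ℝ → ℝ) {D : ℝ} (hD : 0 ≤ D)
    (hUb : ∀ u ∈ II, ∀ v ∈ II, |U u v| ≤ D) : 0 ≤ cutNorm U := by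
  have h := cut_le U hD hUb MeasurableSet.empty MeasurableSet.empty
  simp only [Set.empty_inter, Measure.restrict_empty, integral_zero_measure, abs_zero] at h
  exact h

lemma step_half {H : ℝ → ℝ} (hH : StronglyMeasurable H) {K : ℝ} (hK : 0 ≤ K)
    (hHb : ∀ u ∈ II, |H u| ≤ K)
    {c : ℝ → ℝ} {M : ℝ} (hM : 0 ≤ M) (hcM : ∀ x, |c x| ≤ M)
    {β : ℝ} (hbound : ∀ A : Set ℝ, MeasurableSet A → |∫ u in A ∩ II, H u| ≤ β) :
    |∫ u in II, H u * c u| ≤ 2 * M * β := by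
  have hHi : Integrable H (volume.restrict II) := by
    refine (integrable_const K).mono' hH.aestronglyMeasurable ?_
    filter_upwards [ae_restrict_mem measurableSet_Icc] with u hu
    simpa using hHb u hu
  have h1 : |∫ u in II, H u * c u| ≤ ∫ u in II, M * |H u| := by
    refine (abs_integral_le _ _).trans ?_
    refine integral_mono_of_nonneg (Filter.Eventually.of_forall fun u => abs_nonneg _)
      (hHi.abs.const_mul M) (Filter.Eventually.of_forall fun u => ?_)
    calc |H u * c u| = |H u| * |c u| := abs_mul _ _
      _ ≤ |H u| * M := mul_le_mul_of_nonneg_left (hcM u) (abs_nonneg _)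
      _ = M * |H u| := mul_comm _ _
  set S : Set ℝ := {u | 0 ≤ H u} with hSdef
  have hSm : MeasurableSet S := measurableSet_le measurable_const hH.measurable
  have e1 : ∫ u in S ∩ II, |H u| = ∫ u in S ∩ II, H u := by
    refine integral_congr_ae ?_
    filter_upwards [ae_restrict_mem (hSm.inter measurableSet_Icc)] with u hu
    exact abs_of_nonneg hu.1
  have e2 : ∫ u in Sᶜ ∩ II, |H u| = -∫ u in Sᶜ ∩ II, H u := by
    rw [← integral_neg]
    refine integral_congr_ae ?_
    filter_upwards [ae_restrict_mem (hSm.compl.inter measurableSet_Icc)] with u hu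
    exact abs_of_neg (lt_of_not_ge hu.1)
  have e3 : (∫ u in S, |H u| ∂(volume.restrict II)) + ∫ u in Sᶜ, |H u| ∂(volume.restrict II)
      = ∫ u in II, |H u| := integral_add_compl hSm hHi.abs
  rw [Measure.restrict_restrict hSm, Measure.restrict_restrict hSm.compl] at e3
  have hsplit : ∫ u in II, |H u| = (∫ u in S ∩ II, H u) + -(∫ u in Sᶜ ∩ II, H u) := by
    rw [← e3, e1, e2]
  have hb1 := hbound S hSm
  have hb2 := hbound Sᶜ hSm.compl
  have h2 : ∫ u in II, M * |H u| = M * ∫ u in II, |H u| := integral_const_mul M _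
  have hβ1 := (abs_le.1 hb1).2
  have hβ2 := (abs_le.1 hb2).1
  have h3 : ∫ u in II, |H u| ≤ 2 * β := by rw [hsplit]; linarith
  calc |∫ u in II, H u * c u| ≤ ∫ u in II, M * |H u| := h1
    _ = M * ∫ u in II, |H u| := h2
    _ ≤ M * (2 * β) := mul_le_mul_of_nonneg_left h3 hM
    _ = 2 * M * β := by ring

lemma quad_bdd_le (U : ℝ → ℝ → ℝ) (hU : Measurable (Function.uncurry U)) {D M : ℝ}
    (hD : 0 ≤ D) (hM : 0 ≤ M) (hUb : ∀ u ∈ II, ∀ v ∈ II, |U u v| ≤ D)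
    {a b : ℝ → ℝ} (hb : Measurable b)
    (haM : ∀ x, |a x| ≤ M) (hbM : ∀ x, |b x| ≤ M) :
    |∫ u in II, (∫ v in II, U u v * b v) * a u| ≤ 4 * M ^ 2 * cutNorm U := by
  have hm2 : Measurable (Function.uncurry fun u v => U u v * b v) :=
    hU.mul (hb.comp measurable_snd)
  have hFm : StronglyMeasurable fun u => ∫ v in II, U u v * b v :=
    hm2.stronglyMeasurable.integral_prod_right
  have claim : ∀ A : Set ℝ, MeasurableSet A →
      |∫ u in A ∩ II, ∫ v in II, U u v * b v| ≤ 2 * M * cutNorm U := by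
    intro A hA
    haveI : IsFiniteMeasure (volume.restrict (A ∩ II)) := finRestr _ Set.inter_subset_right
    have hint : Integrable (Function.uncurry fun u v => U u v * b v)
        ((volume.restrict (A ∩ II)).prod (volume.restrict II)) := by
      refine (integrable_const (D * M)).mono' hm2.aestronglyMeasurable ?_
      rw [Measure.prod_restrict]
      filter_upwards [ae_restrict_mem ((hA.inter measurableSet_Icc).prod measurableSet_Icc)]
        with p hp
      rw [Function.uncurry, Real.norm_eq_abs, abs_mul]
      exact mul_le_mul (hUb p.1 hp.1.2 p.2 hp.2) (hbM p.2) (abs_nonneg _) hD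
    have hswap : ∫ u in A ∩ II, ∫ v in II, U u v * b v
        = ∫ v in II, (∫ u in A ∩ II, U u v) * b v := by
      rw [integral_integral_swap hint]
      refine integral_congr_ae (Filter.Eventually.of_forall fun v => ?_)
      exact integral_mul_const (b v) _
    rw [hswap]
    have hswapm : Measurable (Function.uncurry fun v u => U u v) := hU.comp measurable_swap
    have hGm : StronglyMeasurable fun v => ∫ u in A ∩ II, U u v :=
      hswapm.stronglyMeasurable.integral_prod_right
    have hGb : ∀ v ∈ II, |∫ u in A ∩ II, U u v| ≤ D := fun v hv =>
      abs_setIntegral_le (hA.inter measurableSet_Icc) Set.inter_subset_right hD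
        (fun u hu => hUb u hu.2 v hv)
    have hGbound : ∀ B : Set ℝ, MeasurableSet B →
        |∫ v in B ∩ II, ∫ u in A ∩ II, U u v| ≤ cutNorm U := by
      intro B hB
      haveI : IsFiniteMeasure (volume.restrict (B ∩ II)) := finRestr _ Set.inter_subset_right
      have hint2 : Integrable (Function.uncurry U)
          ((volume.restrict (A ∩ II)).prod (volume.restrict (B ∩ II))) := by
        refine (integrable_const D).mono' hU.aestronglyMeasurable ?_
        rw [Measure.prod_restrict]
        filter_upwards [ae_restrict_mem ((hA.inter measurableSet_Icc).prod
          (hB.inter measurableSet_Icc))] with p hp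
        simpa [Function.uncurry, Real.norm_eq_abs] using hUb p.1 hp.1.2 p.2 hp.2.2
      have heq : ∫ v in B ∩ II, ∫ u in A ∩ II, U u v
          = ∫ u in A ∩ II, ∫ v in B ∩ II, U u v := (integral_integral_swap hint2).symm
      rw [heq]
      exact cut_le U hD hUb hA hB
    exact step_half hGm hD hGb hM hbM hGbound
  have hFb : ∀ u ∈ II, |∫ v in II, U u v * b v| ≤ D * M := by
    intro u hu
    refine abs_setIntegral_le measurableSet_Icc (subset_refl _) (mul_nonneg hD hM) ?_
    intro v hv
    rw [abs_mul]
    exact mul_le_mul (hUb u hu v hv) (hbM v) (abs_nonneg _) hD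
  have h := step_half hFm (mul_nonneg hD hM) hFb hM haM claim
  calc |∫ u in II, (∫ v in II, U u v * b v) * a u| ≤ 2 * M * (2 * M * cutNorm U) := h
    _ = 4 * M ^ 2 * cutNorm U := by ring

lemma integrable_ker_mul (A : ℝ → ℝ → ℝ) (hA : Measurable (Function.uncurry A)) {Ca : ℝ}
    (hAb : ∀ u ∈ II, ∀ v ∈ II, |A u v| ≤ Ca) {φ : ℝ → ℝ} (hφ : Measurable φ)
    (hφi : Integrable φ (volume.restrict II)) :
    ∀ u ∈ II, Integrable (fun v => A u v * φ v) (volume.restrict II) := by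
  intro u hu
  refine (hφi.abs.const_mul Ca).mono' ((hA.of_uncurry_left.mul hφ).aestronglyMeasurable) ?_
  filter_upwards [ae_restrict_mem measurableSet_Icc] with v hv
  rw [Real.norm_eq_abs, abs_mul]
  exact mul_le_mul_of_nonneg_right (hAb u hu v hv) (abs_nonneg _)

lemma inner_abs_le (A : ℝ → ℝ → ℝ) {Ca : ℝ} (hCa : 0 ≤ Ca)
    (hAb : ∀ u ∈ II, ∀ v ∈ II, |A u v| ≤ Ca) {φ : ℝ → ℝ}
    (hφi : Integrable φ (volume.restrict II)) {u : ℝ} (hu : u ∈ II) :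
    |∫ v in II, A u v * φ v| ≤ Ca * ∫ v in II, |φ v| := by
  refine (abs_integral_le _ _).trans ?_
  refine (integral_mono_of_nonneg (Filter.Eventually.of_forall fun v => abs_nonneg _)
    (hφi.abs.const_mul Ca) ?_).trans ?_
  · filter_upwards [ae_restrict_mem measurableSet_Icc] with v hv
    rw [abs_mul]
    exact mul_le_mul_of_nonneg_right (hAb u hu v hv) (abs_nonneg _)
  · exact le_of_eq (integral_const_mul Ca _)

lemma integrable_outer (A : ℝ → ℝ → ℝ) (hA : Measurable (Function.uncurry A)) {Ca : ℝ}
    (hCa : 0 ≤ Ca) (hAb : ∀ u ∈ II, ∀ v ∈ II, |A u v| ≤ Ca) {a b : ℝ → ℝ}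
    (ha : Measurable a) (hai : Integrable a (volume.restrict II))
    (hb : Measurable b) (hbi : Integrable b (volume.restrict II)) :
    Integrable (fun u => (∫ v in II, A u v * b v) * a u) (volume.restrict II) := by
  have hm : Measurable (Function.uncurry fun u v => A u v * b v) :=
    hA.mul (hb.comp measurable_snd)
  have hs : StronglyMeasurable fun u => ∫ v in II, A u v * b v :=
    hm.stronglyMeasurable.integral_prod_right
  have hK : 0 ≤ Ca * ∫ v in II, |b v| :=
    mul_nonneg hCa (integral_nonneg fun v => abs_nonneg _)
  refine (hai.abs.const_mul (Ca * ∫ v in II, |b v|)).mono'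
    (hs.measurable.mul ha).aestronglyMeasurable ?_
  filter_upwards [ae_restrict_mem measurableSet_Icc] with u hu
  rw [Real.norm_eq_abs, abs_mul]
  exact mul_le_mul_of_nonneg_right (inner_abs_le A hCa hAb hbi hu) (abs_nonneg _)

lemma B_trivial (A : ℝ → ℝ → ℝ) {Ca : ℝ} (hCa : 0 ≤ Ca)
    (hAb : ∀ u ∈ II, ∀ v ∈ II, |A u v| ≤ Ca) {a b : ℝ → ℝ}
    (hai : Integrable a (volume.restrict II)) (hbi : Integrable b (volume.restrict II)) :
    |∫ u in II, (∫ v in II, A u v * b v) * a u|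
      ≤ (Ca * ∫ v in II, |b v|) * ∫ u in II, |a u| := by
  have hK : 0 ≤ Ca * ∫ v in II, |b v| :=
    mul_nonneg hCa (integral_nonneg fun v => abs_nonneg _)
  refine (abs_integral_le _ _).trans ?_
  have h2 : ∫ u in II, |(∫ v in II, A u v * b v) * a u|
      ≤ ∫ u in II, (Ca * ∫ v in II, |b v|) * |a u| := by
    refine integral_mono_of_nonneg (Filter.Eventually.of_forall fun u => abs_nonneg _)
      (hai.abs.const_mul _) ?_
    filter_upwards [ae_restrict_mem measurableSet_Icc] with u hu
    rw [abs_mul]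
    exact mul_le_mul_of_nonneg_right (inner_abs_le A hCa hAb hbi hu) (abs_nonneg _)
  exact h2.trans (le_of_eq (integral_const_mul _ _))

lemma quadForm_congr_ae (Wk : ℝ → ℝ → ℝ) {φ ψ : ℝ → ℝ}
    (h : φ =ᵐ[volume.restrict II] ψ) : quadForm Wk φ = quadForm Wk ψ := by
  unfold quadForm
  have hinner : ∀ u, (∫ v in II, Wk u v * φ v) = ∫ v in II, Wk u v * ψ v := by
    intro u
    refine integral_congr_ae ?_
    filter_upwards [h] with v hv
    rw [hv]
  refine integral_congr_ae ?_
  filter_upwards [h] with u hu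
  rw [hu, hinner]

lemma quadForm_neg (Wk : ℝ → ℝ → ℝ) (φ : ℝ → ℝ) :
    quadForm (fun u v => -(Wk u v)) φ = -quadForm Wk φ := by
  unfold quadForm
  rw [← integral_neg]
  refine integral_congr_ae (Filter.Eventually.of_forall fun u => ?_)
  show (∫ v in II, -Wk u v * φ v) * φ u = -((∫ v in II, Wk u v * φ v) * φ u)
  have : (∫ v in II, -Wk u v * φ v) = -∫ v in II, Wk u v * φ v := by
    rw [← integral_neg]
    refine integral_congr_ae (Filter.Eventually.of_forall fun v => ?_)
    ring
  rw [this]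
  ring

lemma quadForm_smul (Wk : ℝ → ℝ → ℝ) (φ : ℝ → ℝ) (c : ℝ) :
    quadForm Wk (fun x => c * φ x) = c ^ 2 * quadForm Wk φ := by
  unfold quadForm
  rw [← integral_const_mul]
  refine integral_congr_ae (Filter.Eventually.of_forall fun u => ?_)
  show (∫ v in II, Wk u v * (c * φ v)) * (c * φ u) = c ^ 2 * ((∫ v in II, Wk u v * φ v) * φ u)
  have : (∫ v in II, Wk u v * (c * φ v)) = c * ∫ v in II, Wk u v * φ v := by
    rw [← integral_const_mul]
    refine integral_congr_ae (Filter.Eventually.of_forall fun v => ?_)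
    ring
  rw [this]
  ring

lemma quadForm_sub (A B : ℝ → ℝ → ℝ) (hA : Measurable (Function.uncurry A))
    (hB : Measurable (Function.uncurry B)) {Ca Cb : ℝ} (hCa : 0 ≤ Ca) (hCb : 0 ≤ Cb)
    (hAb : ∀ u ∈ II, ∀ v ∈ II, |A u v| ≤ Ca) (hBb : ∀ u ∈ II, ∀ v ∈ II, |B u v| ≤ Cb)
    {φ : ℝ → ℝ} (hφ : Measurable φ) (hφi : Integrable φ (volume.restrict II)) :
    quadForm (fun u v => A u v - B u v) φ = quadForm A φ - quadForm B φ := by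
  unfold quadForm
  have hkerA := integrable_ker_mul A hA hAb hφ hφi
  have hkerB := integrable_ker_mul B hB hBb hφ hφi
  have intA := integrable_outer A hA hCa hAb hφ hφi hφ hφi
  have intB := integrable_outer B hB hCb hBb hφ hφi hφ hφi
  rw [← integral_sub intA intB]
  refine integral_congr_ae ?_
  filter_upwards [ae_restrict_mem measurableSet_Icc] with u hu
  have e : ∫ v in II, (A u v - B u v) * φ v
      = (∫ v in II, A u v * φ v) - ∫ v in II, B u v * φ v := by
    rw [← integral_sub (hkerA u hu) (hkerB u hu)]
    refine integral_congr_ae (Filter.Eventually.of_forall fun v => ?_)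
    ring
  rw [e, sub_mul]

lemma abs_int_le_one {φ : ℝ → ℝ} (hφm : AEStronglyMeasurable φ (volume.restrict II))
    (hφ2 : MemLp φ 2 (volume.restrict II)) (hsq : ∫ u in II, (φ u) ^ 2 ≤ 1) :
    ∫ u in II, |φ u| ≤ 1 := by
  have hsqi : Integrable (fun u => (φ u) ^ 2) (volume.restrict II) :=
    (memLp_two_iff_integrable_sq hφm).mp hφ2
  have h1 : ∫ u in II, |φ u| ≤ ∫ u in II, ((φ u) ^ 2 + 1) / 2 := by
    refine integral_mono_of_nonneg (Filter.Eventually.of_forall fun u => abs_nonneg _)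
      ((hsqi.add (integrable_const 1)).div_const 2) (Filter.Eventually.of_forall fun u => ?_)
    nlinarith [sq_nonneg (|φ u| - 1), sq_abs (φ u)]
  refine h1.trans ?_
  rw [integral_div, integral_add hsqi (integrable_const 1), integral_const]
  simp only [probReal_univ, smul_eq_mul, one_mul]
  linarith

lemma trunc_le_abs (M t : ℝ) (hM : 0 < M) : |max (-M) (min M t)| ≤ |t| := by
  rw [abs_le]
  constructor
  · refine le_trans (le_min ?_ ?_) (le_max_right _ _)
    · linarith [abs_nonneg t, hM]
    · linarith [neg_abs_le t]
  · refine max_le ?_ ((min_le_right _ _).trans (le_abs_self t))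
    linarith [abs_nonneg t, hM]

lemma quad_key (U : ℝ → ℝ → ℝ) (hU : Measurable (Function.uncurry U)) {D M : ℝ}
    (hD : 0 ≤ D) (hM : 0 < M) (hUb : ∀ u ∈ II, ∀ v ∈ II, |U u v| ≤ D)
    {φ : ℝ → ℝ} (hφ : Measurable φ) (hφ2 : MemLp φ 2 (volume.restrict II))
    (hsq : ∫ u in II, (φ u) ^ 2 ≤ 1) :
    |quadForm U φ| ≤ 4 * M ^ 2 * cutNorm U + 2 * (D / M) + D / M ^ 2 := by
  set g : ℝ → ℝ := fun u => max (-M) (min M (φ u)) with hgdef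
  set r : ℝ → ℝ := fun u => φ u - g u with hrdef
  have hg : Measurable g := measurable_const.max (measurable_const.min hφ)
  have hgM : ∀ x, |g x| ≤ M := by
    intro x
    rw [abs_le]
    exact ⟨le_max_left _ _, max_le (by linarith) (min_le_left _ _)⟩
  have hgφ : ∀ x, |g x| ≤ |φ x| := fun x => trunc_le_abs M (φ x) hM
  have hr : Measurable r := hφ.sub hg
  have hrb : ∀ x, |r x| ≤ (φ x) ^ 2 / M := by
    intro x
    rcases le_total (φ x) M with h1 | h1
    · rcases le_total (-M) (φ x) with h2 | h2
      · have : g x = φ x := by rw [hgdef]; simp only [min_eq_right h1, max_eq_right h2]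
        rw [hrdef]
        simp only [this, sub_self, abs_zero]
        positivity
      · have hgx : g x = -M := by
          rw [hgdef]
          simp only [min_eq_right h1, max_eq_left h2]
        rw [hrdef]
        simp only [hgx]
        rw [abs_of_nonpos (by linarith), le_div_iff₀ hM]
        nlinarith
    · have hgx : g x = M := by
        rw [hgdef]
        simp only [min_eq_left h1, max_eq_right (by linarith : -M ≤ M)]
      rw [hrdef]
      simp only [hgx]
      rw [abs_of_nonneg (by linarith), le_div_iff₀ hM]
      nlinarith
  have hφi : Integrable φ (volume.restrict II) := hφ2.integrable one_le_two
  have hgi : Integrable g (volume.restrict II) := by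
    refine (integrable_const M).mono' hg.aestronglyMeasurable ?_
    exact Filter.Eventually.of_forall fun x => by simpa using hgM x
  have hri : Integrable r (volume.restrict II) := hφi.sub hgi
  have hsqi : Integrable (fun u => (φ u) ^ 2) (volume.restrict II) :=
    (memLp_two_iff_integrable_sq hφ.aestronglyMeasurable).mp hφ2
  have habsφ : ∫ u in II, |φ u| ≤ 1 := abs_int_le_one hφ.aestronglyMeasurable hφ2 hsq
  have hg1 : ∫ u in II, |g u| ≤ 1 := by
    refine le_trans (integral_mono_of_nonneg (Filter.Eventually.of_forall fun u => abs_nonneg _)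
      hφi.abs (Filter.Eventually.of_forall fun u => hgφ u)) habsφ
  have hr1 : ∫ u in II, |r u| ≤ 1 / M := by
    have h1 : ∫ u in II, |r u| ≤ ∫ u in II, (φ u) ^ 2 / M :=
      integral_mono_of_nonneg (Filter.Eventually.of_forall fun u => abs_nonneg _)
        (hsqi.div_const M) (Filter.Eventually.of_forall fun u => hrb u)
    refine h1.trans ?_
    rw [integral_div]
    gcongr
  have hkg := integrable_ker_mul U hU hUb hg hgi
  have hkr := integrable_ker_mul U hU hUb hr hri
  have int_gg := integrable_outer U hU hD hUb hg hgi hg hgi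
  have int_gr := integrable_outer U hU hD hUb hg hgi hr hri
  have int_rg := integrable_outer U hU hD hUb hr hri hg hgi
  have int_rr := integrable_outer U hU hD hUb hr hri hr hri
  have e2 : ∀ x, φ x = g x + r x := fun x => by simp [hrdef]
  have hquad : quadForm U φ =
      (((∫ u in II, (∫ v in II, U u v * g v) * g u)
        + ∫ u in II, (∫ v in II, U u v * r v) * g u)
        + ∫ u in II, (∫ v in II, U u v * g v) * r u)
        + ∫ u in II, (∫ v in II, U u v * r v) * r u := by
    have int12 : Integrable (fun u => (∫ v in II, U u v * g v) * g u
        + (∫ v in II, U u v * r v) * g u) (volume.restrict II) := int_gg.add int_gr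
    have int123 : Integrable (fun u => ((∫ v in II, U u v * g v) * g u
        + (∫ v in II, U u v * r v) * g u)
        + (∫ v in II, U u v * g v) * r u) (volume.restrict II) := int12.add int_rg
    unfold quadForm
    rw [← integral_add int_gg int_gr, ← integral_add int12 int_rg,
        ← integral_add int123 int_rr]
    refine integral_congr_ae ?_
    filter_upwards [ae_restrict_mem measurableSet_Icc] with u hu
    show (∫ v in II, U u v * φ v) * φ u =
      (((∫ v in II, U u v * g v) * g u + (∫ v in II, U u v * r v) * g u)
        + (∫ v in II, U u v * g v) * r u) + (∫ v in II, U u v * r v) * r u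
    have e1 : ∫ v in II, U u v * φ v
        = (∫ v in II, U u v * g v) + ∫ v in II, U u v * r v := by
      rw [← integral_add (hkg u hu) (hkr u hu)]
      refine integral_congr_ae (Filter.Eventually.of_forall fun v => ?_)
      show U u v * φ v = U u v * g v + U u v * r v
      rw [e2 v]; ring
    rw [e1, e2 u]
    ring
  have h11 : |∫ u in II, (∫ v in II, U u v * g v) * g u| ≤ 4 * M ^ 2 * cutNorm U :=
    quad_bdd_le U hU hD hM.le hUb hg hgM hgM
  have habsr_nonneg : 0 ≤ ∫ u in II, |r u| := integral_nonneg fun _ => abs_nonneg _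
  have habsg_nonneg : 0 ≤ ∫ u in II, |g u| := integral_nonneg fun _ => abs_nonneg _
  have h12 : |∫ u in II, (∫ v in II, U u v * r v) * g u| ≤ D / M := by
    refine (B_trivial U hD hUb hgi hri).trans ?_
    calc (D * ∫ v in II, |r v|) * ∫ u in II, |g u|
        ≤ (D * (1 / M)) * 1 :=
          mul_le_mul (mul_le_mul_of_nonneg_left hr1 hD) hg1 habsg_nonneg
            (mul_nonneg hD (by positivity))
      _ = D / M := by ring
  have h13 : |∫ u in II, (∫ v in II, U u v * g v) * r u| ≤ D / M := by
    refine (B_trivial U hD hUb hri hgi).trans ?_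
    calc (D * ∫ v in II, |g v|) * ∫ u in II, |r u|
        ≤ (D * 1) * (1 / M) :=
          mul_le_mul (mul_le_mul_of_nonneg_left hg1 hD) hr1 habsr_nonneg
            (mul_nonneg hD one_pos.le)
      _ = D / M := by ring
  have h14 : |∫ u in II, (∫ v in II, U u v * r v) * r u| ≤ D / M ^ 2 := by
    refine (B_trivial U hD hUb hri hri).trans ?_
    calc (D * ∫ v in II, |r v|) * ∫ u in II, |r u|
        ≤ (D * (1 / M)) * (1 / M) :=
          mul_le_mul (mul_le_mul_of_nonneg_left hr1 hD) hr1 habsr_nonneg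
            (mul_nonneg hD (by positivity))
      _ = D / M ^ 2 := by ring
  have habs4 : ∀ a b c d : ℝ, |a + b + c + d| ≤ |a| + |b| + |c| + |d| := by
    intro a b c d
    calc |a + b + c + d| ≤ |a + b + c| + |d| := abs_add_le _ _
      _ ≤ (|a + b| + |c|) + |d| := add_le_add_left (abs_add_le _ _) _
      _ ≤ ((|a| + |b|) + |c|) + |d| := add_le_add_left (add_le_add_left (abs_add_le _ _) _) _
  rw [hquad]
  refine (habs4 _ _ _ _).trans ?_
  linarith [h11, h12, h13, h14]

lemma normSq (f : Lp ℝ 2 (volume.restrict II)) :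
    ∫ u in II, (f u) ^ 2 = ‖f‖ ^ 2 := by
  have h1 : (inner ℝ f f : ℝ) = ‖f‖ ^ 2 := real_inner_self_eq_norm_sq f
  rw [L2.inner_def] at h1
  simp only [RCLike.inner_apply, starRingEnd_apply, star_trivial] at h1
  rw [← h1]
  refine integral_congr_ae (Filter.Eventually.of_forall fun a => ?_)
  ring

lemma quad_zero (Wk : ℝ → ℝ → ℝ) : quadForm Wk ⇑(0 : Lp ℝ 2 (volume.restrict II)) = 0 := by
  rw [quadForm_congr_ae Wk (Lp.coeFn_zero ℝ 2 (volume.restrict II))]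
  unfold quadForm
  simp

lemma quad_scale (Wk : ℝ → ℝ → ℝ) (f : Lp ℝ 2 (volume.restrict II)) (hf : f ≠ 0) :
    quadForm Wk ⇑f = ‖f‖ ^ 2 * quadForm Wk ⇑((‖f‖⁻¹ : ℝ) • f) := by
  have hc : ‖f‖ ≠ 0 := norm_ne_zero_iff.mpr hf
  have h1 : ⇑((‖f‖⁻¹ : ℝ) • f) =ᵐ[volume.restrict II] fun x => ‖f‖⁻¹ * f x := by
    filter_upwards [Lp.coeFn_smul (‖f‖⁻¹ : ℝ) f] with x hx
    simpa [smul_eq_mul] using hx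
  rw [quadForm_congr_ae Wk h1, quadForm_smul]
  field_simp

lemma norm_normalize (f : Lp ℝ 2 (volume.restrict II)) (hf : f ≠ 0) :
    ‖(‖f‖⁻¹ : ℝ) • f‖ = 1 := by
  have hc : ‖f‖ ≠ 0 := norm_ne_zero_iff.mpr hf
  rw [norm_smul, norm_inv, norm_norm]
  field_simp

lemma rayleigh_of_unit (Wk : ℝ → ℝ → ℝ) {c : ℝ} (hc : 0 ≤ c)
    (hkey : ∀ g : Lp ℝ 2 (volume.restrict II), ‖g‖ = 1 → |quadForm Wk ⇑g| ≤ c) :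
    ∀ f : Lp ℝ 2 (volume.restrict II), |quadForm Wk ⇑f| ≤ c * ‖f‖ ^ 2 := by
  intro f
  by_cases hf : f = 0
  · subst hf
    rw [quad_zero]
    simp
  · rw [quad_scale Wk f hf, abs_mul, abs_of_nonneg (by positivity : (0:ℝ) ≤ ‖f‖ ^ 2)]
    calc ‖f‖ ^ 2 * |quadForm Wk ⇑((‖f‖⁻¹ : ℝ) • f)| ≤ ‖f‖ ^ 2 * c :=
          mul_le_mul_of_nonneg_left (hkey _ (norm_normalize f hf)) (by positivity)
      _ = c * ‖f‖ ^ 2 := mul_comm _ _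

lemma rayleigh_of_unit₂ (A B : ℝ → ℝ → ℝ) {c : ℝ} (hc : 0 ≤ c)
    (hkey : ∀ g : Lp ℝ 2 (volume.restrict II), ‖g‖ = 1 →
      |quadForm A ⇑g - quadForm B ⇑g| ≤ c) :
    ∀ f : Lp ℝ 2 (volume.restrict II), |quadForm A ⇑f - quadForm B ⇑f| ≤ c * ‖f‖ ^ 2 := by
  intro f
  by_cases hf : f = 0
  · subst hf
    rw [quad_zero, quad_zero]
    simp
  · rw [quad_scale A f hf, quad_scale B f hf, ← mul_sub, abs_mul,
      abs_of_nonneg (by positivity : (0:ℝ) ≤ ‖f‖ ^ 2)]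
    calc ‖f‖ ^ 2 * |quadForm A ⇑((‖f‖⁻¹ : ℝ) • f) - quadForm B ⇑((‖f‖⁻¹ : ℝ) • f)|
        ≤ ‖f‖ ^ 2 * c :=
          mul_le_mul_of_nonneg_left (hkey _ (norm_normalize f hf)) (by positivity)
      _ = c * ‖f‖ ^ 2 := mul_comm _ _

lemma quad_unit_bound (Wk : ℝ → ℝ → ℝ) {C0 : ℝ} (hC0 : 0 ≤ C0)
    (hWb : ∀ u ∈ II, ∀ v ∈ II, |Wk u v| ≤ C0)
    (g : Lp ℝ 2 (volume.restrict II)) (hg : ‖g‖ = 1) : |quadForm Wk ⇑g| ≤ C0 := by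
  have hgi : Integrable ⇑g (volume.restrict II) := (Lp.memLp g).integrable one_le_two
  have habs : ∫ u in II, |g u| ≤ 1 :=
    abs_int_le_one (Lp.aestronglyMeasurable g) (Lp.memLp g) (by rw [normSq g, hg]; norm_num)
  have habsnn : 0 ≤ ∫ u in II, |g u| := integral_nonneg fun _ => abs_nonneg _
  have h := B_trivial Wk hC0 hWb hgi hgi
  have h2 : (C0 * ∫ v in II, |g v|) * ∫ u in II, |g u| ≤ C0 := by
    calc (C0 * ∫ v in II, |g v|) * ∫ u in II, |g u| ≤ (C0 * 1) * 1 :=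
          mul_le_mul (mul_le_mul_of_nonneg_left habs hC0) habs habsnn
            (mul_nonneg hC0 one_pos.le)
      _ = C0 := by ring
  exact le_trans (by unfold quadForm; exact h) h2

lemma CF_diff (A B : ℝ → ℝ → ℝ) {C0 ε : ℝ} (hC0 : 0 ≤ C0) (hε : 0 ≤ ε)
    (hAr : ∀ f : Lp ℝ 2 (volume.restrict II), |quadForm A ⇑f| ≤ C0 * ‖f‖ ^ 2)
    (hBr : ∀ f : Lp ℝ 2 (volume.restrict II), |quadForm B ⇑f| ≤ C0 * ‖f‖ ^ 2)
    (hdiff : ∀ f : Lp ℝ 2 (volume.restrict II),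
      |quadForm A ⇑f - quadForm B ⇑f| ≤ ε * ‖f‖ ^ 2)
    {j : ℕ} (hj : 1 ≤ j) : |CF A j - CF B j| ≤ ε := by
  rcases isEmpty_or_nonempty {V : Submodule ℝ (Lp ℝ 2 (volume.restrict II)) //
      Module.finrank ℝ V = j} with hι | hι
  · unfold CF
    rw [Real.iSup_of_isEmpty, Real.iSup_of_isEmpty]
    simpa using hε
  · have hrq : ∀ (Wk : ℝ → ℝ → ℝ),
        (∀ f : Lp ℝ 2 (volume.restrict II), |quadForm Wk ⇑f| ≤ C0 * ‖f‖ ^ 2) →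
        ∀ (f : Lp ℝ 2 (volume.restrict II)), f ≠ 0 → |quadForm Wk ⇑f / ‖f‖ ^ 2| ≤ C0 := by
      intro Wk hWk f hf
      have hnf : (0:ℝ) < ‖f‖ ^ 2 := by
        have : ‖f‖ ≠ 0 := norm_ne_zero_iff.mpr hf
        positivity
      rw [abs_div, abs_of_nonneg hnf.le, div_le_iff₀ hnf]
      exact hWk f
    have hne : ∀ V : {V : Submodule ℝ (Lp ℝ 2 (volume.restrict II)) //
        Module.finrank ℝ V = j},
        Nonempty {f : Lp ℝ 2 (volume.restrict II) // f ∈ V.1 ∧ f ≠ 0} := by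
      intro V
      have hbot : V.1 ≠ ⊥ := by
        intro h
        have := V.2
        rw [h, finrank_bot] at this
        omega
      obtain ⟨x, hx, hx0⟩ := Submodule.exists_mem_ne_zero_of_ne_bot hbot
      exact ⟨⟨x, hx, hx0⟩⟩
    have main : ∀ (P Q : ℝ → ℝ → ℝ),
        (∀ f : Lp ℝ 2 (volume.restrict II), |quadForm P ⇑f| ≤ C0 * ‖f‖ ^ 2) →
        (∀ f : Lp ℝ 2 (volume.restrict II), |quadForm Q ⇑f| ≤ C0 * ‖f‖ ^ 2) →
        (∀ f : Lp ℝ 2 (volume.restrict II),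
          |quadForm P ⇑f - quadForm Q ⇑f| ≤ ε * ‖f‖ ^ 2) →
        CF P j ≤ CF Q j + ε := by
      intro P Q hP hQ hPQ
      unfold CF
      refine ciSup_le fun V => ?_
      haveI := hne V
      have hbddP : BddBelow (Set.range fun f : {f : Lp ℝ 2 (volume.restrict II) //
          f ∈ V.1 ∧ f ≠ 0} => quadForm P ⇑f.1 / ‖f.1‖ ^ 2) := by
        refine ⟨-C0, ?_⟩
        rintro x ⟨g, rfl⟩
        linarith [(abs_le.1 (hrq P hP g.1 g.2.2)).1]
      have hbddQ : BddBelow (Set.range fun f : {f : Lp ℝ 2 (volume.restrict II) //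
          f ∈ V.1 ∧ f ≠ 0} => quadForm Q ⇑f.1 / ‖f.1‖ ^ 2) := by
        refine ⟨-C0, ?_⟩
        rintro x ⟨g, rfl⟩
        linarith [(abs_le.1 (hrq Q hQ g.1 g.2.2)).1]
      have h1 : (⨅ f : {f : Lp ℝ 2 (volume.restrict II) // f ∈ V.1 ∧ f ≠ 0},
          quadForm P ⇑f.1 / ‖f.1‖ ^ 2)
          ≤ (⨅ f : {f : Lp ℝ 2 (volume.restrict II) // f ∈ V.1 ∧ f ≠ 0},
          quadForm Q ⇑f.1 / ‖f.1‖ ^ 2) + ε := by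
        rw [← sub_le_iff_le_add]
        refine le_ciInf fun f => ?_
        have hle := ciInf_le hbddP f
        have hnf : (0:ℝ) < ‖f.1‖ ^ 2 := by
          have : ‖f.1‖ ≠ 0 := norm_ne_zero_iff.mpr f.2.2
          positivity
        have h2 : quadForm P ⇑f.1 / ‖f.1‖ ^ 2 ≤ quadForm Q ⇑f.1 / ‖f.1‖ ^ 2 + ε := by
          have h3 := (abs_le.1 (hPQ f.1)).2
          have h4 : (quadForm P ⇑f.1 - quadForm Q ⇑f.1) / ‖f.1‖ ^ 2 ≤ ε := by
            rw [div_le_iff₀ hnf]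
            linarith
          have h5 : quadForm P ⇑f.1 / ‖f.1‖ ^ 2
              = quadForm Q ⇑f.1 / ‖f.1‖ ^ 2
                + (quadForm P ⇑f.1 - quadForm Q ⇑f.1) / ‖f.1‖ ^ 2 := by
            field_simp
            ring
          linarith
        linarith
      refine h1.trans ?_
      have hbddsup : BddAbove (Set.range fun V' : {V : Submodule ℝ
          (Lp ℝ 2 (volume.restrict II)) // Module.finrank ℝ V = j} =>
          ⨅ f : {f : Lp ℝ 2 (volume.restrict II) // f ∈ V'.1 ∧ f ≠ 0},
            quadForm Q ⇑f.1 / ‖f.1‖ ^ 2) := by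
        refine ⟨C0, ?_⟩
        rintro x ⟨V', rfl⟩
        haveI := hne V'
        obtain ⟨f0⟩ := hne V'
        have hbddQ' : BddBelow (Set.range fun f : {f : Lp ℝ 2 (volume.restrict II) //
            f ∈ V'.1 ∧ f ≠ 0} => quadForm Q ⇑f.1 / ‖f.1‖ ^ 2) := by
          refine ⟨-C0, ?_⟩
          rintro x ⟨g, rfl⟩
          linarith [(abs_le.1 (hrq Q hQ g.1 g.2.2)).1]
        exact le_trans (ciInf_le hbddQ' f0) ((abs_le.1 (hrq Q hQ f0.1 f0.2.2)).2)
      have h6 := le_ciSup hbddsup V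
      linarith
    have hd2 : ∀ f : Lp ℝ 2 (volume.restrict II),
        |quadForm B ⇑f - quadForm A ⇑f| ≤ ε * ‖f‖ ^ 2 := by
      intro f
      rw [abs_sub_comm]
      exact hdiff f
    have m1 := main A B hAr hBr hdiff
    have m2 := main B A hBr hAr hd2
    rw [abs_sub_le_iff]
    constructor <;> linarith

/-- If uniformly bounded graphons `W_n` converge to `W` in cut norm, then for every `j ≥ 1` the
`j`-th largest positive eigenvalue and the `j`-th smallest negative eigenvalue (Courant–Fischer
values of `T_{W_n}` and `−T_{W_n}`, with missing eigenvalues replaced by `0`) converge to those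
of `W`. -/
theorem stmt8 (C : ℝ) (hC : 0 < C) (W : ℝ → ℝ → ℝ) (Wn : ℕ → ℝ → ℝ → ℝ)
    (hWmeas : Measurable (Function.uncurry W))
    (hWnmeas : ∀ n, Measurable (Function.uncurry (Wn n)))
    (hWsymm : ∀ u ∈ Set.Icc (0 : ℝ) 1, ∀ v ∈ Set.Icc (0 : ℝ) 1, W u v = W v u)
    (hWnsymm : ∀ n, ∀ u ∈ Set.Icc (0 : ℝ) 1, ∀ v ∈ Set.Icc (0 : ℝ) 1, Wn n u v = Wn n v u)
    (hWbdd : ∀ u ∈ Set.Icc (0 : ℝ) 1, ∀ v ∈ Set.Icc (0 : ℝ) 1, |W u v| ≤ C)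
    (hWnbdd : ∀ n, ∀ u ∈ Set.Icc (0 : ℝ) 1, ∀ v ∈ Set.Icc (0 : ℝ) 1, |Wn n u v| ≤ C)
    (hconv : Filter.Tendsto (fun n => cutNorm (fun u v => Wn n u v - W u v))
      Filter.atTop (nhds 0)) :
    ∀ j : ℕ, 1 ≤ j →
      Filter.Tendsto (fun n => CF (Wn n) j) Filter.atTop (nhds (CF W j)) ∧
      Filter.Tendsto (fun n => CF (fun u v => -(Wn n u v)) j) Filter.atTop
        (nhds (CF (fun u v => -(W u v)) j)) := by
  intro j hj
  have hCle : (0:ℝ) ≤ C := hC.le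
  have hWray : ∀ f : Lp ℝ 2 (volume.restrict II), |quadForm W ⇑f| ≤ C * ‖f‖ ^ 2 :=
    rayleigh_of_unit W hCle (fun g hg => quad_unit_bound W hCle hWbdd g hg)
  have hWnray : ∀ n, ∀ f : Lp ℝ 2 (volume.restrict II),
      |quadForm (Wn n) ⇑f| ≤ C * ‖f‖ ^ 2 := fun n =>
    rayleigh_of_unit (Wn n) hCle (fun g hg => quad_unit_bound (Wn n) hCle (hWnbdd n) g hg)
  have hWrayneg : ∀ f : Lp ℝ 2 (volume.restrict II),
      |quadForm (fun u v => -(W u v)) ⇑f| ≤ C * ‖f‖ ^ 2 := by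
    intro f
    rw [quadForm_neg, abs_neg]
    exact hWray f
  have hWnrayneg : ∀ n, ∀ f : Lp ℝ 2 (volume.restrict II),
      |quadForm (fun u v => -(Wn n u v)) ⇑f| ≤ C * ‖f‖ ^ 2 := by
    intro n f
    rw [quadForm_neg, abs_neg]
    exact hWnray n f
  have key : ∀ ε > (0:ℝ), ∃ N, ∀ n ≥ N,
      |CF (Wn n) j - CF W j| ≤ ε ∧
      |CF (fun u v => -(Wn n u v)) j - CF (fun u v => -(W u v)) j| ≤ ε := by
    intro ε hε
    set D : ℝ := 2 * C with hDdef
    have hDpos : 0 < D := by positivity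
    set M : ℝ := max 1 (6 * D / ε) with hMdef
    have hM1 : (1:ℝ) ≤ M := le_max_left _ _
    have hM0 : (0:ℝ) < M := lt_of_lt_of_le one_pos hM1
    have htail : 2 * (D / M) + D / M ^ 2 ≤ ε / 2 := by
      have h6 : 6 * D / ε ≤ M := le_max_right _ _
      have hDM : D / M ≤ ε / 6 := by
        rw [div_le_div_iff₀ hM0 (by norm_num)]
        have h7 := (div_le_iff₀ hε).mp h6
        linarith
      have hMM : M ≤ M ^ 2 := by nlinarith
      have hDM2 : D / M ^ 2 ≤ D / M := by gcongr
      linarith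
    obtain ⟨N, hN⟩ := (Metric.tendsto_atTop.mp hconv) (ε / (8 * M ^ 2)) (by positivity)
    refine ⟨N, fun n hn => ?_⟩
    set Un : ℝ → ℝ → ℝ := fun u v => Wn n u v - W u v with hUndef
    have hUnm : Measurable (Function.uncurry Un) := (hWnmeas n).sub hWmeas
    have hUnb : ∀ u ∈ II, ∀ v ∈ II, |Un u v| ≤ D := by
      intro u hu v hv
      refine (abs_sub _ _).trans ?_
      have := hWnbdd n u hu v hv
      have := hWbdd u hu v hv
      rw [hDdef]
      linarith
    have hcn0 : 0 ≤ cutNorm Un := cutNorm_nonneg Un hDpos.le hUnb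
    have hcn : cutNorm Un ≤ ε / (8 * M ^ 2) := by
      have h8 := hN n hn
      rw [Real.dist_eq, sub_zero, abs_of_nonneg hcn0] at h8
      exact h8.le
    have hcnM : 4 * M ^ 2 * cutNorm Un ≤ ε / 2 := by
      calc 4 * M ^ 2 * cutNorm Un ≤ 4 * M ^ 2 * (ε / (8 * M ^ 2)) := by
            exact mul_le_mul_of_nonneg_left hcn (by positivity)
        _ = ε / 2 := by field_simp; ring
    have hunit : ∀ g : Lp ℝ 2 (volume.restrict II), ‖g‖ = 1 →
        |quadForm (Wn n) ⇑g - quadForm W ⇑g| ≤ ε := by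
      intro g hg
      have hgm : Measurable ⇑g := (Lp.stronglyMeasurable g).measurable
      have hgi : Integrable ⇑g (volume.restrict II) := (Lp.memLp g).integrable one_le_two
      have hsub : quadForm Un ⇑g = quadForm (Wn n) ⇑g - quadForm W ⇑g :=
        quadForm_sub (Wn n) W (hWnmeas n) hWmeas hCle hCle (hWnbdd n) hWbdd hgm hgi
      rw [← hsub]
      have hk := quad_key Un hUnm hDpos.le hM0 hUnb hgm (Lp.memLp g)
        (by rw [normSq g, hg]; norm_num)
      linarith
    have hdiff : ∀ f : Lp ℝ 2 (volume.restrict II),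
        |quadForm (Wn n) ⇑f - quadForm W ⇑f| ≤ ε * ‖f‖ ^ 2 :=
      rayleigh_of_unit₂ (Wn n) W hε.le hunit
    have hCF1 : |CF (Wn n) j - CF W j| ≤ ε :=
      CF_diff (Wn n) W hCle hε.le (hWnray n) hWray hdiff hj
    have hunitneg : ∀ g : Lp ℝ 2 (volume.restrict II), ‖g‖ = 1 →
        |quadForm (fun u v => -(Wn n u v)) ⇑g - quadForm (fun u v => -(W u v)) ⇑g| ≤ ε := by
      intro g hg
      rw [quadForm_neg, quadForm_neg,
        show -quadForm (Wn n) ⇑g - -quadForm W ⇑g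
          = -(quadForm (Wn n) ⇑g - quadForm W ⇑g) by ring, abs_neg]
      exact hunit g hg
    have hdiffneg : ∀ f : Lp ℝ 2 (volume.restrict II),
        |quadForm (fun u v => -(Wn n u v)) ⇑f - quadForm (fun u v => -(W u v)) ⇑f|
          ≤ ε * ‖f‖ ^ 2 :=
      rayleigh_of_unit₂ _ _ hε.le hunitneg
    have hCF2 : |CF (fun u v => -(Wn n u v)) j - CF (fun u v => -(W u v)) j| ≤ ε :=
      CF_diff _ _ hCle hε.le (hWnrayneg n) hWrayneg hdiffneg hj
    exact ⟨hCF1, hCF2⟩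
  constructor
  · rw [Metric.tendsto_atTop]
    intro ε hε
    obtain ⟨N, hN⟩ := key (ε / 2) (by positivity)
    refine ⟨N, fun n hn => ?_⟩
    rw [Real.dist_eq]
    linarith [(hN n hn).1]
  · rw [Metric.tendsto_atTop]
    intro ε hε
    obtain ⟨N, hN⟩ := key (ε / 2) (by positivity)
    refine ⟨N, fun n hn => ?_⟩
    rw [Real.dist_eq]
    linarith [(hN n hn).2]
end

section
/- Let n ≥ 1 and let S be an n×n real symmetric matrix with eigenvalues μ_1(S) ≥ μ_2(S) ≥ … ≥ μ_n(S) (counted with multiplicity), and let W_G be the graphon induced by S. Then for every 1 ≤ j ≤ n, Λ_j(T_{W_G}) = max(μ_j(S)/n, 0), and for every j > n, Λ_j(T_{W_G}) = 0. -/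
open MeasureTheory

/-- Index of the interval `I_k` of the `n`-part equipartition of `[0,1]` that contains `u`
(0-indexed): `I_k = [k/n, (k+1)/n)` for `k < n - 1` and `I_{n-1} = [(n-1)/n, 1]`. -/
noncomputable def idx (n : ℕ) (hn : 0 < n) (u : ℝ) : Fin n :=
  ⟨min (n - 1) ⌊n * u⌋₊, lt_of_le_of_lt (min_le_left _ _) (Nat.sub_lt hn Nat.one_pos)⟩

/-- The graphon induced by an `n × n` matrix `S`: `W_G(u,v) = S_{kl}` for `u ∈ I_k`, `v ∈ I_l`. -/
noncomputable def inducedGraphon (n : ℕ) (hn : 0 < n) (S : Matrix (Fin n) (Fin n) ℝ)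
    (u v : ℝ) : ℝ :=
  S (idx n hn u) (idx n hn v)

open Set

variable {n : ℕ}

/-- the half-open interval on which `idx = k`. -/
def J (n : ℕ) (k : Fin n) : Set ℝ := Ico ((k : ℝ) / n) (((k : ℝ) + 1) / n)

lemma npos (hn : 0 < n) : (0:ℝ) < n := by exact_mod_cast hn

lemma J_subset (hn : 0 < n) (k : Fin n) : J n k ⊆ Icc (0:ℝ) 1 := by
  intro u hu
  obtain ⟨h1, h2⟩ := hu
  constructor
  · exact le_trans (by positivity) h1
  · refine le_trans h2.le ?_
    rw [div_le_one (npos hn)]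
    exact_mod_cast Nat.succ_le_of_lt k.isLt

lemma idx_eq_of_mem (hn : 0 < n) {k : Fin n} {u : ℝ} (hu : u ∈ J n k) : idx n hn u = k := by
  obtain ⟨h1, h2⟩ := hu
  have hn' : (0:ℝ) < n := npos hn
  have hu0 : 0 ≤ u := le_trans (by positivity) h1
  have hflo : ⌊n * u⌋₊ = k := by
    rw [Nat.floor_eq_iff (by positivity)]
    constructor
    · rw [div_le_iff₀ hn'] at h1
      push_cast
      linarith
    · rw [lt_div_iff₀ hn'] at h2
      push_cast
      linarith
  have : min (n-1) ⌊n * u⌋₊ = k := by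
    rw [hflo]
    exact min_eq_right (Nat.le_sub_one_of_lt k.isLt)
  simp [idx, this]

lemma J_disjoint : Pairwise (Function.onFun Disjoint (J n)) := by
  intro k l hkl
  simp only [Function.onFun, J]
  rw [Set.Ico_disjoint_Ico]
  rcases lt_or_gt_of_ne hkl with h | h
  · have : (k:ℝ) + 1 ≤ l := by exact_mod_cast Nat.succ_le_of_lt (by exact_mod_cast h)
    refine le_trans (min_le_left _ _) (le_trans ?_ (le_max_right _ _))
    gcongr
  · have : (l:ℝ) + 1 ≤ k := by exact_mod_cast Nat.succ_le_of_lt (by exact_mod_cast h)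
    refine le_trans (min_le_right _ _) (le_trans ?_ (le_max_left _ _))
    gcongr

lemma J_union (hn : 0 < n) : ⋃ k, J n k = Ico (0:ℝ) 1 := by
  have hn' : (0:ℝ) < n := npos hn
  ext u
  simp only [mem_iUnion, J, mem_Ico]
  constructor
  · rintro ⟨k, h1, h2⟩
    constructor
    · exact le_trans (by positivity) h1
    · refine lt_of_lt_of_le h2 ?_
      rw [div_le_one hn']
      exact_mod_cast Nat.succ_le_of_lt k.isLt
  · rintro ⟨h1, h2⟩
    have hflt : ⌊n * u⌋₊ < n := by
      rw [Nat.floor_lt (by positivity)]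
      nlinarith
    refine ⟨⟨⌊n * u⌋₊, hflt⟩, ?_, ?_⟩
    · rw [div_le_iff₀ hn']
      calc ((⟨⌊n*u⌋₊, hflt⟩ : Fin n) : ℝ) = (⌊n*u⌋₊ : ℝ) := rfl
        _ ≤ n * u := Nat.floor_le (by positivity)
        _ = u * n := mul_comm _ _
    · rw [lt_div_iff₀ hn']
      calc u * n = n * u := mul_comm _ _
        _ < ⌊n*u⌋₊ + 1 := Nat.lt_floor_add_one _
        _ = ((⟨⌊n*u⌋₊, hflt⟩ : Fin n) : ℝ) + 1 := rfl

lemma volume_J (hn : 0 < n) (k : Fin n) : volume (J n k) = ENNReal.ofReal (1 / n) := by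
  have hn' : (0:ℝ) < n := npos hn
  rw [J, Real.volume_Ico]
  congr 1
  field_simp
  ring

lemma measurable_comp_idx (hn : 0 < n) {α : Type*} [MeasurableSpace α] (g : Fin n → α) :
    Measurable fun u => g (idx n hn u) := by
  have : (fun u => g (idx n hn u)) =
      (fun m : ℕ => g ⟨min (n-1) m, lt_of_le_of_lt (min_le_left _ _) (Nat.sub_lt hn Nat.one_pos)⟩)
        ∘ (fun u : ℝ => ⌊(n:ℝ) * u⌋₊) := rfl
  rw [this]
  exact (measurable_from_top).comp ((measurable_const_mul _).nat_floor)

lemma integrableOn_comp_idx_mul (hn : 0 < n) (g : Fin n → ℝ) {f : ℝ → ℝ}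
    (hf : IntegrableOn f (Icc (0:ℝ) 1)) :
    IntegrableOn (fun u => g (idx n hn u) * f u) (Icc (0:ℝ) 1) := by
  apply Integrable.bdd_mul (c := ∑ k, ‖g k‖) hf ((measurable_comp_idx hn g).aestronglyMeasurable)
  refine Filter.Eventually.of_forall fun u => ?_
  exact Finset.single_le_sum (f := fun k => ‖g k‖) (fun k _ => norm_nonneg _) (Finset.mem_univ _)

lemma measurableSet_J (k : Fin n) : MeasurableSet (J n k) := measurableSet_Ico

lemma integral_comp_idx_mul (hn : 0 < n) (g : Fin n → ℝ) {f : ℝ → ℝ}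
    (hf : IntegrableOn f (Icc (0:ℝ) 1)) :
    ∫ u in Icc (0:ℝ) 1, g (idx n hn u) * f u = ∑ k, g k * ∫ u in J n k, f u := by
  have hint : ∀ k : Fin n, IntegrableOn (fun u => g (idx n hn u) * f u) (J n k) :=
    fun k => (integrableOn_comp_idx_mul hn g hf).mono_set (J_subset hn k)
  rw [integral_Icc_eq_integral_Ico, ← J_union hn,
    integral_iUnion_fintype measurableSet_J J_disjoint hint]
  refine Finset.sum_congr rfl fun k _ => ?_
  rw [show ∫ u in J n k, g (idx n hn u) * f u = ∫ u in J n k, g k * f u from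
    setIntegral_congr_fun (measurableSet_J k) (fun u hu => by rw [idx_eq_of_mem hn hu]),
    integral_const_mul]

lemma integral_comp_idx (hn : 0 < n) (g : Fin n → ℝ) :
    ∫ u in Icc (0:ℝ) 1, g (idx n hn u) = (∑ k, g k) / n := by
  have h1 : IntegrableOn (fun _ : ℝ => (1:ℝ)) (Icc (0:ℝ) 1) := integrableOn_const (by simp)
  have := integral_comp_idx_mul hn g h1
  simp only [mul_one] at this
  rw [this, Finset.sum_div]
  refine Finset.sum_congr rfl fun k _ => ?_
  rw [setIntegral_const, measureReal_def, volume_J hn, smul_eq_mul, ENNReal.toReal_ofReal (by positivity), mul_one]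
  ring

lemma quadForm_eq (hn : 0 < n) (S : Matrix (Fin n) (Fin n) ℝ) {f : ℝ → ℝ}
    (hf : IntegrableOn f (Icc (0:ℝ) 1)) :
    quadForm (inducedGraphon n hn S) f
      = ∑ k, (∑ l, S k l * ∫ u in J n l, f u) * ∫ u in J n k, f u := by
  set A : Fin n → ℝ := fun k => ∫ u in J n k, f u with hA
  have hinner : ∀ u : ℝ, (∫ v in Icc (0:ℝ) 1, inducedGraphon n hn S u v * f v)
      = ∑ l, S (idx n hn u) l * A l := fun u => integral_comp_idx_mul hn _ hf
  calc quadForm (inducedGraphon n hn S) f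
      = ∫ u in Icc (0:ℝ) 1, (fun k => ∑ l, S k l * A l) (idx n hn u) * f u := by
        refine setIntegral_congr_fun measurableSet_Icc fun u _ => ?_
        rw [hinner u]
    _ = ∑ k, (∑ l, S k l * A l) * A k := by
        simpa [hA] using integral_comp_idx_mul hn (fun k => ∑ l, S k l * A l) hf

section LA
variable {S : Matrix (Fin n) (Fin n) ℝ} {μ : Fin n → ℝ} {v : Fin n → Fin n → ℝ}

lemma col_ortho (hortho : ∀ i j, ∑ k, v i k * v j k = if i = j then 1 else 0) :
    ∀ k l, ∑ i, v i k * v i l = if k = l then 1 else 0 := by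
  have hV : (Matrix.of v) * (Matrix.of v).transpose = 1 := by
    ext i j
    simpa [Matrix.mul_apply, Matrix.one_apply] using hortho i j
  have hV' := mul_eq_one_comm.mp hV
  intro k l
  have := congrFun (congrFun hV' k) l
  simpa [Matrix.mul_apply, Matrix.one_apply, mul_comm] using this

lemma matrix_quad (hortho : ∀ i j, ∑ k, v i k * v j k = if i = j then 1 else 0)
    (heig : ∀ j, S.mulVec (v j) = μ j • v j) (a : Fin n → ℝ) :
    ∑ k, (∑ l, S k l * a l) * a k = ∑ i, μ i * (∑ k, v i k * a k) ^ 2 := by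
  classical
  have hcol := col_ortho hortho
  set b : Fin n → ℝ := fun i => ∑ m, v i m * a m with hb
  have heig' : ∀ i k, ∑ l, S k l * v i l = μ i * v i k := by
    intro i k
    have := congrFun (heig i) k
    simpa [Matrix.mulVec, dotProduct] using this
  have hrep : ∀ k, a k = ∑ i, b i * v i k := by
    intro k
    calc a k = ∑ m, (if k = m then (1:ℝ) else 0) * a m := by
          simp [Finset.sum_ite_eq]
      _ = ∑ m, (∑ i, v i k * v i m) * a m := by
          refine Finset.sum_congr rfl fun m _ => ?_; rw [hcol]
      _ = ∑ m, ∑ i, v i k * v i m * a m := by simp [Finset.sum_mul]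
      _ = ∑ i, ∑ m, v i k * v i m * a m := Finset.sum_comm
      _ = ∑ i, b i * v i k := by
          refine Finset.sum_congr rfl fun i _ => ?_
          rw [hb]
          simp only [mul_assoc, ← Finset.mul_sum]
          ring
  have hmv : ∀ k, (∑ l, S k l * a l) = ∑ i, b i * (μ i * v i k) := by
    intro k
    calc (∑ l, S k l * a l) = ∑ l, S k l * (∑ i, b i * v i l) := by
          refine Finset.sum_congr rfl fun l _ => ?_; rw [← hrep]
      _ = ∑ l, ∑ i, b i * (S k l * v i l) := by
          refine Finset.sum_congr rfl fun l _ => ?_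
          rw [Finset.mul_sum]
          exact Finset.sum_congr rfl fun i _ => by ring
      _ = ∑ i, ∑ l, b i * (S k l * v i l) := Finset.sum_comm
      _ = ∑ i, b i * (μ i * v i k) := by
          refine Finset.sum_congr rfl fun i _ => ?_
          rw [← Finset.mul_sum, heig']
  calc ∑ k, (∑ l, S k l * a l) * a k = ∑ k, ∑ i, b i * μ i * (v i k * a k) := by
        refine Finset.sum_congr rfl fun k _ => ?_
        rw [hmv, Finset.sum_mul]
        exact Finset.sum_congr rfl fun i _ => by ring
    _ = ∑ i, ∑ k, b i * μ i * (v i k * a k) := Finset.sum_comm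
    _ = ∑ i, μ i * (∑ k, v i k * a k) ^ 2 := by
        refine Finset.sum_congr rfl fun i _ => ?_
        rw [← Finset.mul_sum]
        have : ∑ k, v i k * a k = b i := by rw [hb]
        rw [this]
        ring
end LA

section L2
open RealInnerProductSpace

lemma quadForm_congr {W : ℝ → ℝ → ℝ} {f g : ℝ → ℝ}
    (h : f =ᵐ[volume.restrict (Icc (0:ℝ) 1)] g) : quadForm W f = quadForm W g := by
  unfold quadForm
  have hinner : ∀ u, (∫ v in Icc (0:ℝ) 1, W u v * f v) = ∫ v in Icc (0:ℝ) 1, W u v * g v := by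
    intro u
    refine integral_congr_ae ?_
    filter_upwards [h] with x hx
    rw [hx]
  refine integral_congr_ae ?_
  filter_upwards [h] with x hx
  rw [hx, hinner]

variable (hn : 0 < n) (v : Fin n → Fin n → ℝ)

noncomputable def ef (i : Fin n) : ℝ → ℝ := fun u => Real.sqrt n * v i (idx n hn u)

lemma mem_ef (i : Fin n) : MemLp (ef hn v i) 2 (volume.restrict (Icc (0:ℝ) 1)) := by
  refine MemLp.of_bound ?_ (Real.sqrt n * ∑ k, ‖v i k‖) ?_
  · exact ((measurable_comp_idx hn (v i)).const_mul _).aestronglyMeasurable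
  · refine Filter.Eventually.of_forall fun u => ?_
    rw [ef, Real.norm_eq_abs, abs_mul, abs_of_nonneg (Real.sqrt_nonneg _)]
    exact mul_le_mul_of_nonneg_left
      (Finset.single_le_sum (f := fun k => ‖v i k‖) (fun k _ => norm_nonneg _)
        (Finset.mem_univ _)) (Real.sqrt_nonneg _)

noncomputable def E (i : Fin n) : Lp ℝ 2 (volume.restrict (Icc (0:ℝ) 1)) :=
  (mem_ef hn v i).toLp (ef hn v i)

lemma E_coe (i : Fin n) : ⇑(E hn v i) =ᵐ[volume.restrict (Icc (0:ℝ) 1)] ef hn v i :=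
  (mem_ef hn v i).coeFn_toLp

lemma inner_eq (f g : Lp ℝ 2 (volume.restrict (Icc (0:ℝ) 1))) :
    ⟪f, g⟫ = ∫ u in Icc (0:ℝ) 1, f u * g u :=
  by rw [L2.inner_def]; simp [mul_comm]

lemma inner_E (hortho : ∀ i j, ∑ k, v i k * v j k = if i = j then 1 else 0) (i j : Fin n) :
    ⟪E hn v i, E hn v j⟫ = if i = j then 1 else 0 := by
  rw [inner_eq]
  have h1 : ∫ u in Icc (0:ℝ) 1, (E hn v i) u * (E hn v j) u
      = ∫ u in Icc (0:ℝ) 1, ef hn v i u * ef hn v j u := by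
    refine integral_congr_ae ?_
    filter_upwards [E_coe hn v i, E_coe hn v j] with x hx hy
    rw [hx, hy]
  rw [h1]
  have h2 : ∀ u, ef hn v i u * ef hn v j u = (n : ℝ) * ((fun k => v i k * v j k) (idx n hn u)) := by
    intro u
    rw [ef, ef]
    have : Real.sqrt n * Real.sqrt n = (n:ℝ) := Real.mul_self_sqrt (by positivity)
    ring_nf
    rw [Real.sq_sqrt (by positivity : (0:ℝ) ≤ n)]
    ring
  calc ∫ u in Icc (0:ℝ) 1, ef hn v i u * ef hn v j u
      = ∫ u in Icc (0:ℝ) 1, (n:ℝ) * ((fun k => v i k * v j k) (idx n hn u)) := by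
        exact integral_congr_ae (Filter.Eventually.of_forall fun u => h2 u)
    _ = (n:ℝ) * ((∑ k, v i k * v j k) / n) := by
        rw [integral_const_mul]
        congr 1
        exact integral_comp_idx hn (fun k => v i k * v j k)
    _ = if i = j then 1 else 0 := by
        rw [hortho]
        field_simp

lemma orthonormal_E (hortho : ∀ i j, ∑ k, v i k * v j k = if i = j then 1 else 0) :
    Orthonormal ℝ (E hn v) :=
  orthonormal_iff_ite.mpr (inner_E hn v hortho)

end L2

section L2b
open RealInnerProductSpace
variable (hn : 0 < n) (v : Fin n → Fin n → ℝ)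

lemma integrable_L2 (f : Lp ℝ 2 (volume.restrict (Icc (0:ℝ) 1))) :
    IntegrableOn (⇑f) (Icc (0:ℝ) 1) :=
  (Lp.memLp f).integrable one_le_two

lemma inner_E_eq (f : Lp ℝ 2 (volume.restrict (Icc (0:ℝ) 1))) (i : Fin n) :
    ⟪E hn v i, f⟫ = Real.sqrt n * ∑ k, v i k * ∫ u in J n k, f u := by
  rw [inner_eq]
  calc ∫ u in Icc (0:ℝ) 1, (E hn v i) u * f u
      = ∫ u in Icc (0:ℝ) 1, Real.sqrt n * (v i (idx n hn u) * f u) := by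
        refine integral_congr_ae ?_
        filter_upwards [E_coe hn v i] with x hx
        rw [hx, ef]; ring
    _ = Real.sqrt n * ∫ u in Icc (0:ℝ) 1, v i (idx n hn u) * f u := integral_const_mul _ _
    _ = Real.sqrt n * ∑ k, v i k * ∫ u in J n k, f u := by
        rw [integral_comp_idx_mul hn (v i) (integrable_L2 f)]

lemma quadForm_inner (S : Matrix (Fin n) (Fin n) ℝ) (μ : Fin n → ℝ)
    (hortho : ∀ i j, ∑ k, v i k * v j k = if i = j then 1 else 0)
    (heig : ∀ j, S.mulVec (v j) = μ j • v j)
    (f : Lp ℝ 2 (volume.restrict (Icc (0:ℝ) 1))) :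
    quadForm (inducedGraphon n hn S) ⇑f = ∑ i, (μ i / n) * ⟪E hn v i, f⟫ ^ 2 := by
  rw [quadForm_eq hn S (integrable_L2 f), matrix_quad hortho heig]
  refine Finset.sum_congr rfl fun i _ => ?_
  rw [inner_E_eq hn v f i, mul_pow, Real.sq_sqrt (by positivity : (0:ℝ) ≤ n)]
  have hn' : (0:ℝ) < n := npos hn
  field_simp

lemma norm_sq_eq (f : Lp ℝ 2 (volume.restrict (Icc (0:ℝ) 1))) :
    ‖f‖ ^ 2 = ⟪f, f⟫ := (real_inner_self_eq_norm_sq f).symm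

end L2b

section Haar
open RealInnerProductSpace
variable (hn : 0 < n)

/-- left endpoint/width of the `m`-th dyadic Haar-type bump inside `[0,1/n)`. -/
noncomputable def ha (n : ℕ) (m : ℕ) : ℝ := 1 / (n * 2 ^ (m + 1))

lemma ha_pos (hn : 0 < n) (m : ℕ) : 0 < ha n m := by
  have := npos hn
  rw [ha]; positivity

noncomputable def haar (n : ℕ) (m : ℕ) : ℝ → ℝ := fun u =>
  (Ico (ha n m) (ha n m + ha n m / 2)).indicator (fun _ => (1:ℝ)) u
    - (Ico (ha n m + ha n m / 2) (2 * ha n m)).indicator (fun _ => (1:ℝ)) u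

lemma haar_support (hn : 0 < n) {m : ℕ} {u : ℝ} (hu : u ∉ Ico (ha n m) (2 * ha n m)) : haar n m u = 0 := by
  have h := ha_pos hn m
  rw [haar, indicator_of_notMem, indicator_of_notMem, sub_zero]
  · intro ⟨h1, h2⟩; exact hu ⟨by linarith, by linarith⟩
  · intro ⟨h1, h2⟩; exact hu ⟨h1, by linarith⟩

lemma haar_measurable (m : ℕ) : Measurable (haar n m) :=
  ((measurable_const.indicator measurableSet_Ico).sub
    (measurable_const.indicator measurableSet_Ico))

lemma indicator_one_range (s : Set ℝ) (u : ℝ) :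
    |s.indicator (fun _ => (1:ℝ)) u| ≤ 1 := by
  by_cases h : u ∈ s <;> simp [h]

lemma haar_memLp (m : ℕ) : MemLp (haar n m) 2 (volume.restrict (Icc (0:ℝ) 1)) := by
  refine MemLp.of_bound (haar_measurable m).aestronglyMeasurable 2 ?_
  refine Filter.Eventually.of_forall fun u => ?_
  rw [haar, Real.norm_eq_abs]
  have h1 := indicator_one_range (Ico (ha n m) (ha n m + ha n m / 2)) u
  have h2 := indicator_one_range (Ico (ha n m + ha n m / 2) (2 * ha n m)) u
  have h3 := abs_sub ((Ico (ha n m) (ha n m + ha n m / 2)).indicator (fun _ => (1:ℝ)) u)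
    ((Ico (ha n m + ha n m / 2) (2 * ha n m)).indicator (fun _ => (1:ℝ)) u)
  linarith

end Haar

section Haar2
open RealInnerProductSpace

lemma setIntegral_haar (m : ℕ) (s : Set ℝ) :
    ∫ u in s, haar n m u
      = (volume (s ∩ Ico (ha n m) (ha n m + ha n m / 2))).toReal
        - (volume (s ∩ Ico (ha n m + ha n m / 2) (2 * ha n m))).toReal := by
  have hi1 : IntegrableOn ((Ico (ha n m) (ha n m + ha n m / 2)).indicator fun _ => (1:ℝ)) s volume := by
    rw [IntegrableOn, integrable_indicator_iff measurableSet_Ico]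
    exact (integrableOn_const (lt_of_le_of_lt
      (Measure.restrict_apply_le _ _) measure_Ico_lt_top).ne)
  have hi2 : IntegrableOn ((Ico (ha n m + ha n m / 2) (2 * ha n m)).indicator fun _ => (1:ℝ)) s volume := by
    rw [IntegrableOn, integrable_indicator_iff measurableSet_Ico]
    exact (integrableOn_const (lt_of_le_of_lt
      (Measure.restrict_apply_le _ _) measure_Ico_lt_top).ne)
  rw [show (∫ u in s, haar n m u) = ∫ u in s,
      ((Ico (ha n m) (ha n m + ha n m / 2)).indicator (fun _ => (1:ℝ)) u
        - (Ico (ha n m + ha n m / 2) (2 * ha n m)).indicator (fun _ => (1:ℝ)) u) from rfl,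
    integral_sub hi1 hi2, setIntegral_indicator measurableSet_Ico,
    setIntegral_indicator measurableSet_Ico, setIntegral_const, setIntegral_const]
  simp [measureReal_def]

lemma two_ha_le (hn : 0 < n) (m : ℕ) : 2 * ha n m ≤ 1 / n := by
  have hn' : (0:ℝ) < n := npos hn
  have h2 : (1:ℝ) ≤ 2 ^ m := one_le_pow₀ (by norm_num)
  have e : 2 * (1 / ((n:ℝ) * 2 ^ (m + 1))) = 1 / ((n:ℝ) * 2 ^ m) := by
    rw [pow_succ]
    field_simp
  rw [ha, e]
  apply one_div_le_one_div_of_le hn'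
  nlinarith

lemma haar_J_integral (hn : 0 < n) (m : ℕ) (k : Fin n) :
    ∫ u in J n k, haar n m u = 0 := by
  have ha' := ha_pos hn m
  have h2a := two_ha_le hn m
  have hn' : (0:ℝ) < n := npos hn
  rw [setIntegral_haar]
  by_cases hk : (k : ℕ) = 0
  · have hk' : ((k : ℕ) : ℝ) = 0 := by rw [hk]; norm_num
    have hs1 : Ico (ha n m) (ha n m + ha n m / 2) ⊆ J n k := by
      intro u hu
      obtain ⟨h1u, h2u⟩ := hu
      refine ⟨?_, ?_⟩
      · rw [hk', zero_div]
        linarith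
      · rw [hk']
        calc u < ha n m + ha n m / 2 := h2u
          _ ≤ 2 * ha n m := by linarith
          _ ≤ 1 / n := h2a
          _ = (0 + 1) / n := by norm_num
    have hs2 : Ico (ha n m + ha n m / 2) (2 * ha n m) ⊆ J n k := by
      intro u hu
      obtain ⟨h1u, h2u⟩ := hu
      refine ⟨?_, ?_⟩
      · rw [hk', zero_div]
        linarith
      · rw [hk']
        calc u < 2 * ha n m := h2u
          _ ≤ 1 / n := h2a
          _ = (0 + 1) / n := by norm_num
    rw [inter_eq_self_of_subset_right hs1, inter_eq_self_of_subset_right hs2,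
      Real.volume_Ico, Real.volume_Ico,
      ENNReal.toReal_ofReal (by linarith), ENNReal.toReal_ofReal (by linarith)]
    ring
  · have hk1 : (1:ℝ) ≤ ((k:ℕ):ℝ) := by exact_mod_cast Nat.one_le_iff_ne_zero.mpr hk
    have hlow : ∀ u ∈ J n k, 1/(n:ℝ) ≤ u := by
      intro u hu
      refine le_trans ?_ hu.1
      rw [div_le_div_iff₀ hn' hn']
      nlinarith
    have he1 : J n k ∩ Ico (ha n m) (ha n m + ha n m / 2) = ∅ := by
      ext u; simp only [mem_inter_iff, mem_empty_iff_false, iff_false]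
      rintro ⟨hu, h1, h2⟩
      have := hlow u hu
      linarith
    have he2 : J n k ∩ Ico (ha n m + ha n m / 2) (2 * ha n m) = ∅ := by
      ext u; simp only [mem_inter_iff, mem_empty_iff_false, iff_false]
      rintro ⟨hu, h1, h2⟩
      have := hlow u hu
      linarith
    rw [he1, he2]
    simp

lemma haar_sq (hn : 0 < n) (m : ℕ) (u : ℝ) :
    (haar n m u)^2 = (Ico (ha n m) (2 * ha n m)).indicator (fun _ => (1:ℝ)) u := by
  have h := ha_pos hn m
  rw [haar]
  by_cases h1 : u ∈ Ico (ha n m) (ha n m + ha n m / 2)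
  · have hm : u ∈ Ico (ha n m) (2 * ha n m) := ⟨h1.1, by linarith [h1.2]⟩
    have h2 : u ∉ Ico (ha n m + ha n m / 2) (2 * ha n m) := by
      rintro ⟨hA, _⟩; linarith [h1.2]
    rw [indicator_of_mem h1, indicator_of_notMem h2, indicator_of_mem hm]
    norm_num
  · by_cases h2 : u ∈ Ico (ha n m + ha n m / 2) (2 * ha n m)
    · have hm : u ∈ Ico (ha n m) (2 * ha n m) := ⟨by linarith [h2.1], h2.2⟩
      rw [indicator_of_notMem h1, indicator_of_mem h2, indicator_of_mem hm]
      norm_num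
    · have hm : u ∉ Ico (ha n m) (2 * ha n m) := by
        rintro ⟨hA, hB⟩
        rw [mem_Ico] at h1 h2
        push_neg at h1 h2
        by_cases hu : u < ha n m + ha n m / 2
        · linarith [h1 hA]
        · push_neg at hu
          linarith [h2 hu]
      rw [indicator_of_notMem h1, indicator_of_notMem h2, indicator_of_notMem hm]
      norm_num

noncomputable def Hm (n : ℕ) (m : ℕ) : Lp ℝ 2 (volume.restrict (Icc (0:ℝ) 1)) :=
  (haar_memLp (n := n) m).toLp (haar n m)

lemma Hm_coe (m : ℕ) : ⇑(Hm n m) =ᵐ[volume.restrict (Icc (0:ℝ) 1)] haar n m :=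
  (haar_memLp m).coeFn_toLp

open RealInnerProductSpace in
lemma inner_Hm_self (hn : 0 < n) (m : ℕ) : ⟪Hm n m, Hm n m⟫ = ha n m := by
  have ha' := ha_pos hn m
  have h2a := two_ha_le hn m
  have hn' : (0:ℝ) < n := npos hn
  rw [inner_eq]
  calc ∫ u in Icc (0:ℝ) 1, (Hm n m) u * (Hm n m) u
      = ∫ u in Icc (0:ℝ) 1, (Ico (ha n m) (2 * ha n m)).indicator (fun _ => (1:ℝ)) u := by
        refine integral_congr_ae ?_
        filter_upwards [Hm_coe m] with x hx
        rw [hx, ← haar_sq hn m x]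
        ring
    _ = ha n m := by
        rw [setIntegral_indicator measurableSet_Ico, setIntegral_const]
        have hsub : Ico (ha n m) (2 * ha n m) ⊆ Icc (0:ℝ) 1 := by
          intro u ⟨h1, h2⟩
          have hn1 : 1/(n:ℝ) ≤ 1 := by
            rw [div_le_one hn']
            exact_mod_cast hn
          exact ⟨by linarith, by linarith⟩
        rw [inter_eq_self_of_subset_right hsub, measureReal_def, Real.volume_Ico,
          ENNReal.toReal_ofReal (by linarith)]
        simp
        ring

open RealInnerProductSpace in
lemma inner_Hm_ne (hn : 0 < n) {m m' : ℕ} (hmm : m ≠ m') : ⟪Hm n m, Hm n m'⟫ = 0 := by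
  have key : ∀ p q : ℕ, p < q → ∀ u, haar n p u * haar n q u = 0 := by
    intro p q hpq u
    by_cases h1 : u ∈ Ico (ha n p) (2 * ha n p)
    · by_cases h2 : u ∈ Ico (ha n q) (2 * ha n q)
      · exfalso
        have h2aq : 2 * ha n q ≤ ha n p := by
          rw [ha, ha]
          have hn' : (0:ℝ) < n := npos hn
          have e : 2 * (1 / ((n:ℝ) * 2 ^ (q + 1))) = 1 / ((n:ℝ) * 2 ^ q) := by
            rw [pow_succ]; field_simp
          rw [e]
          apply one_div_le_one_div_of_le (by positivity)
          have : (2:ℝ) ^ (p+1) ≤ 2 ^ q := by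
            apply pow_le_pow_right₀ (by norm_num)
            omega
          nlinarith
        obtain ⟨ha1, hb1⟩ := h1
        obtain ⟨ha2, hb2⟩ := h2
        linarith
      · rw [haar_support hn h2, mul_zero]
    · rw [haar_support hn h1, zero_mul]
  have key' : ∀ u, haar n m u * haar n m' u = 0 := by
    intro u
    rcases lt_or_gt_of_ne hmm with h | h
    · exact key m m' h u
    · rw [mul_comm]; exact key m' m h u
  rw [inner_eq]
  calc ∫ u in Icc (0:ℝ) 1, (Hm n m) u * (Hm n m') u
      = ∫ u in Icc (0:ℝ) 1, (0:ℝ) := by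
        refine integral_congr_ae ?_
        filter_upwards [Hm_coe m, Hm_coe m'] with x hx hy
        rw [hx, hy, key']
    _ = 0 := integral_zero _ _

noncomputable def HN (n : ℕ) (m : ℕ) : Lp ℝ 2 (volume.restrict (Icc (0:ℝ) 1)) :=
  (Real.sqrt (ha n m))⁻¹ • Hm n m

open RealInnerProductSpace in
lemma orthonormal_HN (hn : 0 < n) : Orthonormal ℝ (HN n) := by
  rw [orthonormal_iff_ite]
  intro m m'
  rw [HN, HN, real_inner_smul_left, real_inner_smul_right]
  by_cases h : m = m'
  · subst h
    rw [inner_Hm_self hn m, if_pos rfl]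
    have ha' := ha_pos hn m
    rw [← Real.sqrt_mul_self (le_of_lt ha')]
    have hs : (0:ℝ) < Real.sqrt (ha n m) := Real.sqrt_pos.mpr ha'
    field_simp
    rw [Real.sq_sqrt (Real.sqrt_nonneg _)]
  · rw [inner_Hm_ne hn h, if_neg h]
    ring

lemma HN_J_integral (hn : 0 < n) (m : ℕ) (k : Fin n) :
    ∫ u in J n k, (HN n m) u = 0 := by
  have hcoe : ⇑(HN n m) =ᵐ[volume.restrict (Icc (0:ℝ) 1)]
      fun u => (Real.sqrt (ha n m))⁻¹ * haar n m u := by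
    filter_upwards [Lp.coeFn_smul ((Real.sqrt (ha n m))⁻¹) (Hm n m),
      Hm_coe (n := n) m] with x hx hy
    rw [HN, hx]
    simp [hy]
  have hcoe' : ⇑(HN n m) =ᵐ[volume.restrict (J n k)]
      fun u => (Real.sqrt (ha n m))⁻¹ * haar n m u :=
    ae_restrict_of_ae_restrict_of_subset (J_subset hn k) hcoe
  rw [integral_congr_ae hcoe', integral_const_mul, haar_J_integral hn m k, mul_zero]

section Main
open RealInnerProductSpace

variable (hn : 0 < n) (S : Matrix (Fin n) (Fin n) ℝ) (μ : Fin n → ℝ) (v : Fin n → Fin n → ℝ)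

lemma bessel (hortho : ∀ i j, ∑ k, v i k * v j k = if i = j then 1 else 0)
    (f : Lp ℝ 2 (volume.restrict (Icc (0:ℝ) 1))) (s : Finset (Fin n)) :
    ∑ i ∈ s, ⟪E hn v i, f⟫ ^ 2 ≤ ‖f‖ ^ 2 := by
  have h := (orthonormal_E hn v hortho).sum_inner_products_le (s := s) f
  simpa [Real.norm_eq_abs, sq_abs] using h

lemma rayleigh_abs (hortho : ∀ i j, ∑ k, v i k * v j k = if i = j then 1 else 0)
    (heig : ∀ j, S.mulVec (v j) = μ j • v j)
    (f : Lp ℝ 2 (volume.restrict (Icc (0:ℝ) 1))) :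
    |quadForm (inducedGraphon n hn S) ⇑f| ≤ (∑ i, |μ i| / n) * ‖f‖ ^ 2 := by
  have hn' : (0:ℝ) < n := npos hn
  rw [quadForm_inner hn v S μ hortho heig f]
  calc |∑ i, (μ i / n) * ⟪E hn v i, f⟫ ^ 2|
      ≤ ∑ i, |(μ i / n) * ⟪E hn v i, f⟫ ^ 2| := Finset.abs_sum_le_sum_abs _ _
    _ ≤ ∑ i, (|μ i| / n) * ‖f‖ ^ 2 := by
        refine Finset.sum_le_sum fun i _ => ?_
        rw [abs_mul, abs_sq, abs_div, abs_of_nonneg (le_of_lt hn')]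
        refine mul_le_mul_of_nonneg_left ?_ (by positivity)
        have := bessel hn v hortho f {i}
        simpa using this
    _ = (∑ i, |μ i| / n) * ‖f‖ ^ 2 := (Finset.sum_mul _ _ _).symm

lemma rayleigh_mem (hortho : ∀ i j, ∑ k, v i k * v j k = if i = j then 1 else 0)
    (heig : ∀ j, S.mulVec (v j) = μ j • v j)
    {f : Lp ℝ 2 (volume.restrict (Icc (0:ℝ) 1))} (hf0 : f ≠ 0) :
    -(∑ i, |μ i| / n) ≤ quadForm (inducedGraphon n hn S) ⇑f / ‖f‖ ^ 2 ∧
      quadForm (inducedGraphon n hn S) ⇑f / ‖f‖ ^ 2 ≤ ∑ i, |μ i| / n := by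
  have hpos : (0:ℝ) < ‖f‖ ^ 2 := pow_pos (norm_pos_iff.mpr hf0) 2
  have h := abs_le.mp (rayleigh_abs hn S μ v hortho heig f)
  constructor
  · rw [le_div_iff₀ hpos, neg_mul]
    exact h.1
  · rw [div_le_iff₀ hpos]
    exact h.2

end Main

section Main2
open RealInnerProductSpace

variable (hn : 0 < n) (S : Matrix (Fin n) (Fin n) ℝ) (μ : Fin n → ℝ) (v : Fin n → Fin n → ℝ)

lemma bddBelow_rayleigh (hortho : ∀ i j, ∑ k, v i k * v j k = if i = j then 1 else 0)
    (heig : ∀ j, S.mulVec (v j) = μ j • v j)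
    (V : Submodule ℝ (Lp ℝ 2 (volume.restrict (Icc (0:ℝ) 1)))) :
    BddBelow (Set.range fun f : {f : Lp ℝ 2 (volume.restrict (Set.Icc (0 : ℝ) 1)) //
        f ∈ V ∧ f ≠ 0} =>
      quadForm (inducedGraphon n hn S) (f.1 : ℝ → ℝ) / ‖f.1‖ ^ 2) := by
  refine ⟨-(∑ i, |μ i| / n), ?_⟩
  rintro x ⟨f, rfl⟩
  exact (rayleigh_mem hn S μ v hortho heig f.2.2).1

lemma exists_perp (t : Finset (Fin n)) {j : ℕ}
    {V : Submodule ℝ (Lp ℝ 2 (volume.restrict (Icc (0:ℝ) 1)))}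
    (hV : Module.finrank ℝ V = j) (ht : t.card < j) :
    ∃ f, f ∈ V ∧ f ≠ 0 ∧ ∀ i ∈ t, ⟪E hn v i, f⟫ = 0 := by
  classical
  let φ : V →ₗ[ℝ] ({i // i ∈ t} → ℝ) :=
    { toFun := fun x i => ⟪E hn v i.1, (x : Lp ℝ 2 (volume.restrict (Icc (0:ℝ) 1)))⟫
      map_add' := by intro a b; funext i; simp [inner_add_right]
      map_smul' := by intro c a; funext i; simp [inner_smul_right] }
  by_cases hker : LinearMap.ker φ = ⊥
  · exfalso
    have hinj := LinearMap.ker_eq_bot.mp hker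
    have hle := LinearMap.finrank_le_finrank_of_injective hinj
    rw [hV] at hle
    have hcard : Module.finrank ℝ ({i // i ∈ t} → ℝ) = t.card := by
      rw [Module.finrank_pi]
      simp
    omega
  · obtain ⟨x, hx, hx0⟩ := (Submodule.ne_bot_iff _).mp hker
    refine ⟨x.1, x.2, ?_, ?_⟩
    · intro h
      exact hx0 (Subtype.coe_injective h)
    · intro i hi
      exact congrFun (LinearMap.mem_ker.mp hx) ⟨i, hi⟩

lemma CF_le (hortho : ∀ i j, ∑ k, v i k * v j k = if i = j then 1 else 0)
    (heig : ∀ j, S.mulVec (v j) = μ j • v j)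
    {j : ℕ} (t : Finset (Fin n)) (ht : t.card < j) {M : ℝ} (hM : 0 ≤ M)
    (hMt : ∀ i : Fin n, i ∉ t → μ i / n ≤ M) :
    CF (inducedGraphon n hn S) j ≤ M := by
  refine Real.iSup_le ?_ hM
  rintro ⟨V, hV⟩
  obtain ⟨f, hfV, hf0, hperp⟩ := exists_perp hn v t hV ht
  have hR : quadForm (inducedGraphon n hn S) ⇑f / ‖f‖ ^ 2 ≤ M := by
    rw [div_le_iff₀ (pow_pos (norm_pos_iff.mpr hf0) 2),
      quadForm_inner hn v S μ hortho heig f]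
    calc ∑ i, (μ i / n) * ⟪E hn v i, f⟫ ^ 2
        ≤ ∑ i, M * ⟪E hn v i, f⟫ ^ 2 := by
          refine Finset.sum_le_sum fun i _ => ?_
          by_cases hi : i ∈ t
          · rw [hperp i hi]
            simp
          · exact mul_le_mul_of_nonneg_right (hMt i hi) (sq_nonneg _)
      _ = M * ∑ i, ⟪E hn v i, f⟫ ^ 2 := (Finset.mul_sum _ _ _).symm
      _ ≤ M * ‖f‖ ^ 2 :=
          mul_le_mul_of_nonneg_left (bessel hn v hortho f Finset.univ) hM
  exact le_trans (ciInf_le (bddBelow_rayleigh hn S μ v hortho heig V) ⟨f, hfV, hf0⟩) hR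

lemma bddAbove_CF (hortho : ∀ i j, ∑ k, v i k * v j k = if i = j then 1 else 0)
    (heig : ∀ j, S.mulVec (v j) = μ j • v j) {j : ℕ} (hj : j ≠ 0) :
    BddAbove (Set.range fun V : {V : Submodule ℝ (Lp ℝ 2 (volume.restrict (Set.Icc (0 : ℝ) 1))) //
        Module.finrank ℝ V = j} =>
      ⨅ f : {f : Lp ℝ 2 (volume.restrict (Set.Icc (0 : ℝ) 1)) // f ∈ V.1 ∧ f ≠ 0},
        quadForm (inducedGraphon n hn S) (f.1 : ℝ → ℝ) / ‖f.1‖ ^ 2) := by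
  refine ⟨∑ i, |μ i| / n, ?_⟩
  rintro x ⟨V, rfl⟩
  have hne : V.1 ≠ ⊥ := by
    intro hbot
    have h2 := V.2
    rw [hbot, finrank_bot] at h2
    exact hj h2.symm
  obtain ⟨f, hf, hf0⟩ := (Submodule.ne_bot_iff _).mp hne
  exact le_trans (ciInf_le (bddBelow_rayleigh hn S μ v hortho heig V.1) ⟨f, hf, hf0⟩)
    (rayleigh_mem hn S μ v hortho heig hf0).2

lemma le_CF (hortho : ∀ i j, ∑ k, v i k * v j k = if i = j then 1 else 0)
    (heig : ∀ j, S.mulVec (v j) = μ j • v j)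
    {j : ℕ} (hj : j ≠ 0) (w : Fin j → Lp ℝ 2 (volume.restrict (Icc (0:ℝ) 1)))
    (hw : Orthonormal ℝ w) {m0 : ℝ}
    (h : ∀ f, f ∈ Submodule.span ℝ (Set.range w) → f ≠ 0 →
      m0 ≤ quadForm (inducedGraphon n hn S) ⇑f / ‖f‖ ^ 2) :
    m0 ≤ CF (inducedGraphon n hn S) j := by
  have hrank : Module.finrank ℝ (Submodule.span ℝ (Set.range w)) = j := by
    rw [finrank_span_eq_card hw.linearIndependent]
    simp
  have hne : Nonempty {f : Lp ℝ 2 (volume.restrict (Set.Icc (0 : ℝ) 1)) //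
      f ∈ Submodule.span ℝ (Set.range w) ∧ f ≠ 0} := by
    have hbot : Submodule.span ℝ (Set.range w) ≠ ⊥ := by
      intro hb
      rw [hb] at hrank
      rw [finrank_bot] at hrank
      exact hj hrank.symm
    obtain ⟨x, hx, hx0⟩ := (Submodule.ne_bot_iff _).mp hbot
    exact ⟨⟨x, hx, hx0⟩⟩
  have h1 : m0 ≤ ⨅ f : {f : Lp ℝ 2 (volume.restrict (Set.Icc (0 : ℝ) 1)) //
      f ∈ Submodule.span ℝ (Set.range w) ∧ f ≠ 0},
      quadForm (inducedGraphon n hn S) (f.1 : ℝ → ℝ) / ‖f.1‖ ^ 2 :=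
    le_ciInf fun f => h f.1 f.2.1 f.2.2
  exact le_trans h1 (le_ciSup (bddAbove_CF hn S μ v hortho heig hj)
    (⟨Submodule.span ℝ (Set.range w), hrank⟩ :
      {V : Submodule ℝ (Lp ℝ 2 (volume.restrict (Set.Icc (0 : ℝ) 1))) //
        Module.finrank ℝ V = j}))

end Main2

section Main3
open RealInnerProductSpace

variable (hn : 0 < n) (S : Matrix (Fin n) (Fin n) ℝ) (μ : Fin n → ℝ) (v : Fin n → Fin n → ℝ)

lemma zero_le_CF (hortho : ∀ i j, ∑ k, v i k * v j k = if i = j then 1 else 0)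
    (heig : ∀ j, S.mulVec (v j) = μ j • v j) {j : ℕ} (hj : j ≠ 0) :
    0 ≤ CF (inducedGraphon n hn S) j := by
  refine le_CF hn S μ v hortho heig hj (fun m : Fin j => HN n m.val)
    ((orthonormal_HN hn).comp _ Fin.val_injective) ?_
  intro f hf hf0
  have hEf : ∀ i, ⟪E hn v i, f⟫ = 0 := by
    obtain ⟨c, hc⟩ := (Submodule.mem_span_range_iff_exists_fun ℝ).mp hf
    intro i
    rw [← hc, inner_sum]
    refine Finset.sum_eq_zero fun m _ => ?_
    rw [real_inner_smul_right]
    have hz : ⟪E hn v i, HN n m.val⟫ = 0 := by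
      rw [inner_E_eq]
      rw [Finset.sum_eq_zero fun k _ => by rw [HN_J_integral hn m.val k, mul_zero]]
      rw [mul_zero]
    rw [hz, mul_zero]
  have hq : quadForm (inducedGraphon n hn S) ⇑f = 0 := by
    rw [quadForm_inner hn v S μ hortho heig f]
    exact Finset.sum_eq_zero fun i _ => by rw [hEf i]; ring
  rw [hq, zero_div]

lemma mu_le_CF (hortho : ∀ i j, ∑ k, v i k * v j k = if i = j then 1 else 0)
    (heig : ∀ j, S.mulVec (v j) = μ j • v j)
    (hmono : ∀ i j : Fin n, i ≤ j → μ j ≤ μ i) (jj : Fin n) :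
    μ jj / n ≤ CF (inducedGraphon n hn S) ((jj : ℕ) + 1) := by
  have hn' : (0:ℝ) < n := npos hn
  set emb : Fin ((jj : ℕ) + 1) → Fin n :=
    fun m => ⟨m.val, lt_of_lt_of_le m.isLt (Nat.succ_le_of_lt jj.isLt)⟩ with hemb
  have hembinj : Function.Injective emb := by
    intro a b h
    rw [Fin.ext_iff] at h ⊢
    exact h
  refine le_CF hn S μ v hortho heig (Nat.succ_ne_zero _) (E hn v ∘ emb)
    ((orthonormal_E hn v hortho).comp emb hembinj) ?_
  intro f hf hf0
  obtain ⟨c, hc⟩ := (Submodule.mem_span_range_iff_exists_fun ℝ).mp hf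
  set d : Fin n → ℝ := fun i => ⟪E hn v i, f⟫ with hd
  have hd0 : ∀ i, (∀ m, emb m ≠ i) → d i = 0 := by
    intro i hi
    rw [hd]
    simp only []
    rw [← hc, inner_sum]
    refine Finset.sum_eq_zero fun m _ => ?_
    rw [real_inner_smul_right]
    have := inner_E hn v hortho i (emb m)
    rw [if_neg (fun h => hi m (h.symm))] at this
    rw [Function.comp_apply, this, mul_zero]
  have hdm : ∀ m, d (emb m) = c m := by
    intro m
    have := ((orthonormal_E hn v hortho).comp emb hembinj).inner_right_fintype c m
    rw [hc] at this
    exact this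
  have hnorm : ‖f‖ ^ 2 = ∑ m, c m ^ 2 := by
    have hsi := sum_inner (𝕜 := ℝ) Finset.univ (fun m => c m • (E hn v ∘ emb) m) f
    rw [hc] at hsi
    rw [norm_sq_eq, hsi]
    refine Finset.sum_congr rfl fun m _ => ?_
    rw [real_inner_smul_left, Function.comp_apply,
      show ⟪E hn v (emb m), f⟫ = c m from hdm m]
    ring
  have hsum : ∑ i, d i ^ 2 = ∑ m, c m ^ 2 := by
    have h1 : ∑ i ∈ Finset.image emb Finset.univ, d i ^ 2 = ∑ i, d i ^ 2 := by
      refine Finset.sum_subset (Finset.subset_univ _) fun i _ hni => ?_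
      have : ∀ m, emb m ≠ i := by
        intro m hm
        exact hni (Finset.mem_image.mpr ⟨m, Finset.mem_univ _, hm⟩)
      rw [hd0 i this]
      ring
    rw [← h1, Finset.sum_image (fun a _ b _ h => hembinj h)]
    refine Finset.sum_congr rfl fun m _ => ?_
    rw [hdm m]
  have hquad : (μ jj / n) * ‖f‖ ^ 2 ≤ quadForm (inducedGraphon n hn S) ⇑f := by
    rw [quadForm_inner hn v S μ hortho heig f]
    calc (μ jj / n) * ‖f‖ ^ 2 = ∑ i, (μ jj / n) * d i ^ 2 := by
          rw [← Finset.mul_sum, hsum, hnorm]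
      _ ≤ ∑ i, (μ i / n) * d i ^ 2 := by
          refine Finset.sum_le_sum fun i _ => ?_
          by_cases hi : ∃ m, emb m = i
          · obtain ⟨m, rfl⟩ := hi
            refine mul_le_mul_of_nonneg_right ?_ (sq_nonneg _)
            have hle : μ jj ≤ μ (emb m) := hmono (emb m) jj (by
              rw [Fin.le_iff_val_le_val]
              exact Nat.lt_succ_iff.mp m.isLt)
            gcongr
          · rw [hd0 i (fun m hm => hi ⟨m, hm⟩)]
            simp
      _ = ∑ i, (μ i / n) * ⟪E hn v i, f⟫ ^ 2 := rfl
  rw [le_div_iff₀ (pow_pos (norm_pos_iff.mpr hf0) 2)]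
  exact hquad

end Main3

/-- If `S` is an `n × n` real symmetric matrix with eigenvalues `μ_1 ≥ … ≥ μ_n` (counted with
multiplicity, i.e. with an orthonormal eigenbasis `v`), then the Courant–Fischer values of the
integral operator of the induced graphon `W_G` satisfy `Λ_j(T_{W_G}) = max(μ_j / n, 0)` for
`1 ≤ j ≤ n` and `Λ_j(T_{W_G}) = 0` for `j > n`. -/
theorem stmt10 (n : ℕ) (hn : 0 < n) (S : Matrix (Fin n) (Fin n) ℝ) (hS : S.IsSymm)
    (μ : Fin n → ℝ) (hmono : ∀ i j : Fin n, i ≤ j → μ j ≤ μ i)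
    (v : Fin n → Fin n → ℝ)
    (hortho : ∀ i j, ∑ k, v i k * v j k = if i = j then 1 else 0)
    (heig : ∀ j, S.mulVec (v j) = μ j • v j) :
    (∀ j : Fin n, CF (inducedGraphon n hn S) ((j : ℕ) + 1) = max (μ j / n) 0) ∧
    (∀ j : ℕ, n < j → CF (inducedGraphon n hn S) j = 0) := by
  have hn' : (0:ℝ) < n := npos hn
  constructor
  · intro j
    refine le_antisymm ?_ ?_
    · set emb' : Fin (j : ℕ) → Fin n := fun m => ⟨m.val, lt_trans m.isLt j.isLt⟩ with he
      have hinj : Function.Injective emb' := fun a b h => by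
        rw [Fin.ext_iff] at h ⊢; exact h
      refine CF_le hn S μ v hortho heig (Finset.image emb' Finset.univ) ?_
        (le_max_right _ _) ?_
      · rw [Finset.card_image_of_injective _ hinj, Finset.card_univ, Fintype.card_fin]
        omega
      · intro i hi
        have hji : (j:ℕ) ≤ (i:ℕ) := by
          by_contra hlt
          push_neg at hlt
          refine hi (Finset.mem_image.mpr ⟨⟨i.val, hlt⟩, Finset.mem_univ _, ?_⟩)
          rw [Fin.ext_iff]
        have hle : μ i ≤ μ j := hmono j i (by rwa [Fin.le_iff_val_le_val])
        refine le_trans ?_ (le_max_left _ _)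
        gcongr
    · exact max_le (mu_le_CF hn S μ v hortho heig hmono j)
        (zero_le_CF hn S μ v hortho heig (Nat.succ_ne_zero _))
  · intro j hj
    refine le_antisymm ?_ (zero_le_CF hn S μ v hortho heig (by omega))
    refine CF_le hn S μ v hortho heig Finset.univ ?_ le_rfl ?_
    · rw [Finset.card_univ, Fintype.card_fin]
      exact hj
    · intro i hi
      exact absurd (Finset.mem_univ i) hi
end Haar2
end
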